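/- arXiv:2004.10329 — 14 statements merged into one kernel-verified Lean document; each statement's English description precedes it below -/
import Mathlib

section
/- Let M be a Puiseux monoid. Then the following are equivalent: (1) M is dense in ℝ≥0; (2) 0 is a limit point of M ∖ {0}; (3) for every generating set S of M, 0 is a limit point of S. -/
open Set

/-- The image of a set of rationals in the reals. -/
def coeR (S : Set ℚ) : Set ℝ := (fun q : ℚ => (q : ℝ)) '' S

/-- A Puiseux monoid: an additive submonoid of ℚ consisting of nonnegative rationals. -/
def IsPuiseux (M : AddSubmonoid ℚ) : Prop := ∀ x ∈ M, 0 ≤ x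

/-- A set of reals is dense in ℝ≥0 if its closure contains all nonnegative reals. -/
def DenseInNonneg (S : Set ℝ) : Prop := Set.Ici (0 : ℝ) ⊆ closure S

/-- α is a limit point of S: every neighborhood of α meets S in a point other than α. -/
def IsLimitPt (α : ℝ) (S : Set ℝ) : Prop := α ∈ closure (S \ {α})

/-- The set of atoms (irreducibles) of an additive submonoid of ℚ. -/
def atoms (M : AddSubmonoid ℚ) : Set ℚ :=
  {a : ℚ | a ∈ M ∧ a ≠ 0 ∧ ∀ u v : ℚ, u ∈ M → v ∈ M → a = u + v → u = 0 ∨ v = 0}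

/-- M is atomic if it is generated by its set of atoms. -/
def IsAtomicMonoid (M : AddSubmonoid ℚ) : Prop := AddSubmonoid.closure (atoms M) = M

/-- S is somewhere dense in ℝ≥0: dense in some nonempty open interval (r,s) with 0 ≤ r. -/
def SomewhereDenseNonneg (S : Set ℝ) : Prop :=
  ∃ r s : ℝ, 0 ≤ r ∧ r < s ∧ Set.Ioo r s ⊆ closure (S ∩ Set.Ioo r s)

/-- S is nowhere dense in ℝ≥0: for all 0 ≤ r < s, S is not dense in (r,s). -/
def NowhereDenseNonneg (S : Set ℝ) : Prop :=
  ∀ r s : ℝ, 0 ≤ r → r < s → ¬ (Set.Ioo r s ⊆ closure (S ∩ Set.Ioo r s))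

/-- S is eventually dense: dense in (r, ∞) for some r ≥ 0. -/
def EventuallyDense (S : Set ℝ) : Prop :=
  ∃ r : ℝ, 0 ≤ r ∧ Set.Ioi r ⊆ closure (S ∩ Set.Ioi r)

/-- The difference group of M, realized as a subset of ℚ. -/
def gp (M : AddSubmonoid ℚ) : Set ℚ := {z : ℚ | ∃ x ∈ M, ∃ y ∈ M, z = x - y}

/-- The root closure of M. -/
def rootClosure (M : AddSubmonoid ℚ) : Set ℚ :=
  {x ∈ gp M | ∃ n : ℕ, 0 < n ∧ (n : ℚ) * x ∈ M}

/-- The conductorSet of M. -/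
def conductorSet (M : AddSubmonoid ℚ) : Set ℚ :=
  {x ∈ gp M | ∀ y ∈ rootClosure M, x + y ∈ M}

/-- M is finitely generated. -/
def IsFG (M : AddSubmonoid ℚ) : Prop :=
  ∃ F : Finset ℚ, AddSubmonoid.closure (F : Set ℚ) = M

/-- M is an increasing monoid: generated by a monotone nondecreasing sequence
of nonnegative rationals. -/
def IsIncreasing (M : AddSubmonoid ℚ) : Prop :=
  ∃ a : ℕ → ℚ, Monotone a ∧ (∀ n, 0 ≤ a n) ∧ AddSubmonoid.closure (Set.range a) = M

/-- α is a limit point of S from the right. -/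
def RightLimitPt (α : ℝ) (S : Set ℝ) : Prop :=
  ∀ ε : ℝ, 0 < ε → (Set.Ioo α (α + ε) ∩ S).Nonempty

lemma coeR_mem {S : Set ℚ} {q : ℚ} (h : q ∈ S) : (q : ℝ) ∈ coeR S := ⟨q, h, rfl⟩

lemma dense_of_lim (M : AddSubmonoid ℚ) (hM : IsPuiseux M)
    (h : IsLimitPt 0 (coeR ((M : Set ℚ) \ {0}))) : DenseInNonneg (coeR (M : Set ℚ)) := by
  intro x hx
  rw [Metric.mem_closure_iff]
  intro ε hε
  rw [IsLimitPt, Metric.mem_closure_iff] at h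
  obtain ⟨b, hb, hdist⟩ := h ε hε
  obtain ⟨⟨q, ⟨hqM, hq0⟩, rfl⟩, -⟩ := hb
  have hq0' : (0:ℝ) < (q:ℝ) := by
    have : (0:ℚ) ≤ q := hM q hqM
    have : (0:ℚ) < q := lt_of_le_of_ne this (Ne.symm hq0)
    exact_mod_cast this
  have hqε : (q:ℝ) < ε := by
    rw [Real.dist_eq, zero_sub, abs_neg, abs_of_pos hq0'] at hdist
    exact hdist
  set n := ⌊x / (q:ℝ)⌋₊ with hn
  refine ⟨((n • q : ℚ) : ℝ), coeR_mem (M.nsmul_mem hqM n), ?_⟩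
  have hcast : ((n • q : ℚ) : ℝ) = (n : ℝ) * (q:ℝ) := by
    rw [nsmul_eq_mul]; push_cast; ring
  rw [hcast, Real.dist_eq]
  have h1 : (n : ℝ) * (q:ℝ) ≤ x :=
    (le_div_iff₀ hq0').mp (Nat.floor_le (div_nonneg (mem_Ici.mp hx) hq0'.le))
  have h2 : x < ((n:ℝ) + 1) * (q:ℝ) :=
    (div_lt_iff₀ hq0').mp (Nat.lt_floor_add_one (x / (q:ℝ)))
  rw [abs_of_nonneg (by linarith)]
  nlinarith

lemma lim_of_dense (M : AddSubmonoid ℚ) (hM : IsPuiseux M)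
    (h : DenseInNonneg (coeR (M : Set ℚ))) : IsLimitPt 0 (coeR ((M : Set ℚ) \ {0})) := by
  rw [IsLimitPt, Metric.mem_closure_iff]
  intro ε hε
  have hmem : (ε/2 : ℝ) ∈ closure (coeR (M : Set ℚ)) := h (mem_Ici.mpr (by positivity))
  rw [Metric.mem_closure_iff] at hmem
  obtain ⟨b, ⟨q, hqM, rfl⟩, hdist⟩ := hmem (ε/2) (by positivity)
  rw [Real.dist_eq, abs_lt] at hdist
  have hq0 : (0:ℝ) < (q:ℝ) := by linarith
  have hq0' : q ≠ 0 := by exact_mod_cast hq0.ne'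
  refine ⟨(q:ℝ), ⟨⟨q, ⟨hqM, hq0'⟩, rfl⟩, by simpa using hq0.ne'⟩, ?_⟩
  rw [Real.dist_eq, zero_sub, abs_neg, abs_of_pos hq0]
  linarith

lemma gen_of_lim (M : AddSubmonoid ℚ) (hM : IsPuiseux M)
    (h : IsLimitPt 0 (coeR ((M : Set ℚ) \ {0})))
    (S : Set ℚ) (hSM : S ⊆ (M : Set ℚ)) (hgen : AddSubmonoid.closure S = M) :
    IsLimitPt 0 (coeR S) := by
  rw [IsLimitPt, Metric.mem_closure_iff]
  by_contra hcon
  push_neg at hcon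
  obtain ⟨ε, hε, hball⟩ := hcon
  -- every nonzero element of M is ≥ ε
  have key : ∀ m ∈ M, m = 0 ∨ ε ≤ (m : ℝ) := by
    intro m hm
    rw [← hgen] at hm
    induction hm using AddSubmonoid.closure_induction with
    | mem x hx =>
      rcases eq_or_ne x 0 with h0 | h0
      · exact Or.inl h0
      · right
        by_contra hlt
        push_neg at hlt
        have hx0 : (0:ℝ) < (x:ℝ) := by
          have : (0:ℚ) ≤ x := hM x (hSM hx)
          exact_mod_cast lt_of_le_of_ne this (Ne.symm h0)
        have := hball (x:ℝ) ⟨coeR_mem hx, by simpa using hx0.ne'⟩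
        rw [Real.dist_eq, zero_sub, abs_neg, abs_of_pos hx0] at this
        exact absurd hlt (not_lt.mpr this)
    | zero => exact Or.inl rfl
    | add x y hx hy ihx ihy =>
      have hxM : x ∈ M := by rw [← hgen]; exact hx
      have hyM : y ∈ M := by rw [← hgen]; exact hy
      rcases ihx with h0x | hεx
      · rcases ihy with h0y | hεy
        · exact Or.inl (by rw [h0x, h0y, add_zero])
        · right
          have : (0:ℚ) ≤ x := hM x hxM
          have : (0:ℝ) ≤ (x:ℝ) := by exact_mod_cast this
          push_cast
          linarith
      · right
        have : (0:ℚ) ≤ y := hM y hyM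
        have : (0:ℝ) ≤ (y:ℝ) := by exact_mod_cast this
        push_cast
        linarith
  -- but 0 is a limit point of M \ {0}
  rw [IsLimitPt, Metric.mem_closure_iff] at h
  obtain ⟨b, ⟨⟨q, ⟨hqM, hq0⟩, rfl⟩, -⟩, hdist⟩ := h ε hε
  have hq0' : (0:ℝ) < (q:ℝ) := by
    have : (0:ℚ) ≤ q := hM q hqM
    exact_mod_cast lt_of_le_of_ne this (Ne.symm hq0)
  rw [Real.dist_eq, zero_sub, abs_neg, abs_of_pos hq0'] at hdist
  rcases key q hqM with h0 | hle
  · exact hq0 h0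
  · linarith

/-- For a Puiseux monoid `M`, the following are equivalent:
(1) `M` is dense in ℝ≥0; (2) 0 is a limit point of `M \ {0}`;
(3) 0 is a limit point of every generating set of `M`. -/
theorem stmt0 (M : AddSubmonoid ℚ) (hM : IsPuiseux M) :
    (DenseInNonneg (coeR (M : Set ℚ)) ↔ IsLimitPt 0 (coeR ((M : Set ℚ) \ {0}))) ∧
    (DenseInNonneg (coeR (M : Set ℚ)) ↔
      ∀ S : Set ℚ, S ⊆ (M : Set ℚ) → AddSubmonoid.closure S = M → IsLimitPt 0 (coeR S)) := by
  constructor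
  · exact ⟨lim_of_dense M hM, dense_of_lim M hM⟩
  constructor
  · intro hd S hSM hgen
    exact gen_of_lim M hM (lim_of_dense M hM hd) S hSM hgen
  · intro hall
    apply dense_of_lim M hM
    have := hall (M : Set ℚ) (subset_refl _) (AddSubmonoid.closure_eq M)
    have heq : coeR (M : Set ℚ) \ {(0:ℝ)} = coeR ((M : Set ℚ) \ {0}) \ {(0:ℝ)} := by
      ext b
      constructor
      · rintro ⟨⟨q, hq, rfl⟩, hb0⟩
        exact ⟨⟨q, ⟨hq, fun h => hb0 (by simp [mem_singleton_iff.mp h])⟩, rfl⟩, hb0⟩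
      · rintro ⟨⟨q, ⟨hq, -⟩, rfl⟩, hb0⟩
        exact ⟨⟨q, hq, rfl⟩, hb0⟩
    rwa [IsLimitPt, heq] at this
end

section
/- Let M be an atomic Puiseux monoid. Then M is dense in ℝ≥0 if and only if 0 is a limit point of the set of atoms 𝒜(M). -/
open Set

/-- An atomic Puiseux monoid is dense in ℝ≥0 iff 0 is a limit point
of its set of atoms. -/
theorem stmt1 (M : AddSubmonoid ℚ) (hM : IsPuiseux M) (hA : IsAtomicMonoid M) :
    DenseInNonneg (coeR (M : Set ℚ)) ↔ IsLimitPt 0 (coeR (atoms M)) := by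
  constructor
  · intro hD
    rw [IsLimitPt, Metric.mem_closure_iff]
    intro ε hε
    by_contra hcon
    push_neg at hcon
    -- every atom is ≥ ε
    have hatom : ∀ a ∈ atoms M, ε ≤ (a : ℝ) := by
      intro a ha
      have haM : a ∈ M := ha.1
      have hane : a ≠ 0 := ha.2.1
      have h0 : (0 : ℚ) ≤ a := hM a haM
      have hmem : (a : ℝ) ∈ coeR (atoms M) \ {0} := by
        refine ⟨⟨a, ha, rfl⟩, ?_⟩
        simp [hane]
      have := hcon _ hmem
      rwa [Real.dist_eq, zero_sub, abs_neg, abs_of_nonneg (by exact_mod_cast h0)] at this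
    -- every element of M is 0 or ≥ ε
    have hM' : ∀ q ∈ M, q = 0 ∨ ε ≤ (q : ℝ) := by
      intro q hq
      rw [← hA] at hq
      induction hq using AddSubmonoid.closure_induction with
      | mem a ha => exact Or.inr (hatom a ha)
      | zero => exact Or.inl rfl
      | add x y hx hy ihx ihy =>
        rcases ihx with hx0 | hxe
        · rcases ihy with hy0 | hye
          · exact Or.inl (by rw [hx0, hy0, add_zero])
          · refine Or.inr ?_
            have hx0' : (0:ℝ) ≤ (x:ℝ) := by
              have := hM x (hA ▸ hx); exact_mod_cast this
            push_cast
            linarith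
        · refine Or.inr ?_
          have hy0' : (0:ℝ) ≤ (y:ℝ) := by
            have := hM y (hA ▸ hy); exact_mod_cast this
          push_cast
          linarith
    have hsub : coeR (M : Set ℚ) ⊆ {(0:ℝ)} ∪ Set.Ici ε := by
      rintro _ ⟨q, hq, rfl⟩
      rcases hM' q hq with h | h
      · exact Or.inl (by simp [h])
      · exact Or.inr h
    have hclosed : IsClosed ({(0:ℝ)} ∪ Set.Ici ε) :=
      isClosed_singleton.union isClosed_Ici
    have hmem : (ε/2 : ℝ) ∈ closure (coeR (M : Set ℚ)) :=
      hD (Set.mem_Ici.mpr (by positivity))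
    have := closure_minimal hsub hclosed hmem
    rcases this with h | h
    · simp at h; linarith
    · simp at h; linarith
  · intro hL x hx
    rw [Metric.mem_closure_iff]
    intro ε hε
    rw [IsLimitPt, Metric.mem_closure_iff] at hL
    obtain ⟨b, ⟨⟨a, ha, rfl⟩, hbne⟩, hbd⟩ := hL ε hε
    have haM : a ∈ M := ha.1
    have ha0 : (0:ℚ) < a := by
      rcases lt_or_eq_of_le (hM a haM) with h | h
      · exact h
      · exact absurd (by simp [← h]) hbne
    have ha0' : (0:ℝ) < (a:ℝ) := by exact_mod_cast ha0
    have haε : (a:ℝ) < ε := by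
      rwa [Real.dist_eq, zero_sub, abs_neg, abs_of_pos ha0'] at hbd
    set n : ℕ := ⌊x / (a:ℝ)⌋₊ with hn
    have hxa : (0:ℝ) ≤ x / (a:ℝ) := div_nonneg hx ha0'.le
    have hle : (n : ℝ) * (a:ℝ) ≤ x := by
      have := Nat.floor_le hxa
      calc (n:ℝ) * a ≤ (x / a) * a := by nlinarith
        _ = x := div_mul_cancel₀ x ha0'.ne'
    have hlt : x < ((n:ℝ) + 1) * (a:ℝ) := by
      have := Nat.lt_floor_add_one (x / (a:ℝ))
      calc x = (x / a) * a := (div_mul_cancel₀ x ha0'.ne').symm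
        _ < ((n:ℝ) + 1) * a := by nlinarith
    refine ⟨((n • a : ℚ) : ℝ), ⟨n • a, AddSubmonoid.nsmul_mem M haM n, rfl⟩, ?_⟩
    have : ((n • a : ℚ) : ℝ) = (n:ℝ) * (a:ℝ) := by rw [nsmul_eq_mul]; push_cast; ring
    rw [this, Real.dist_eq, abs_of_nonneg (by linarith)]
    nlinarith
end

section
/- If a Puiseux monoid M is not dense in ℝ≥0, then M is atomic. -/
open Set

/-- If a Puiseux monoid is not dense in ℝ≥0 then it is atomic. -/
theorem stmt2 (M : AddSubmonoid ℚ) (hM : IsPuiseux M)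
    (h : ¬ DenseInNonneg (coeR (M : Set ℚ))) : IsAtomicMonoid M := by
  have hex : ∃ ε : ℚ, 0 < ε ∧ ∀ x ∈ M, x ≠ 0 → ε ≤ x := by
    by_contra hc
    push_neg at hc
    apply h
    intro r hr
    have hr0 : (0:ℝ) ≤ r := hr
    rw [Metric.mem_closure_iff]
    intro δ hδ
    obtain ⟨q, hq0, hqδ⟩ := exists_rat_btwn (show (0:ℝ) < δ from hδ)
    have hq0' : (0:ℚ) < q := by exact_mod_cast hq0
    obtain ⟨x, hxM, hx0, hxq⟩ := hc q hq0'
    have hx0' : (0:ℚ) < x := lt_of_le_of_ne (hM x hxM) (Ne.symm hx0)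
    have hxR : (0:ℝ) < (x:ℝ) := by exact_mod_cast hx0'
    set n := ⌊r / (x:ℝ)⌋₊ with hn
    refine ⟨((n • x : ℚ) : ℝ), ⟨n • x, M.nsmul_mem hxM n, rfl⟩, ?_⟩
    have h1 : (n:ℝ) * x ≤ r := by
      have := Nat.floor_le (div_nonneg hr0 hxR.le)
      rw [← hn] at this
      exact (le_div_iff₀ hxR).mp this
    have h2 : r < ((n:ℝ) + 1) * x := by
      have := Nat.lt_floor_add_one (r / (x:ℝ))
      rw [← hn] at this
      calc r = (r / x) * x := by field_simp
        _ < ((n:ℝ) + 1) * x := by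
            exact mul_lt_mul_of_pos_right (by exact_mod_cast this) hxR
    have hcast : ((n • x : ℚ) : ℝ) = (n:ℝ) * (x:ℝ) := by rw [nsmul_eq_mul]; push_cast; ring
    rw [hcast, Real.dist_eq, abs_of_nonneg (by linarith)]
    have hxlt : (x:ℝ) < δ := lt_trans (by exact_mod_cast hxq) hqδ
    nlinarith
  obtain ⟨ε, hε0, hεle⟩ := hex
  apply le_antisymm
  · rw [AddSubmonoid.closure_le]
    intro a ha
    exact ha.1
  · intro x hx
    obtain ⟨n, hn⟩ := exists_nat_gt (x / ε)
    have hxn : x < n * ε := (div_lt_iff₀ hε0).mp hn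
    clear hn
    induction n generalizing x with
    | zero =>
      exfalso
      have := hM x hx
      simp at hxn
      linarith
    | succ n ih =>
      by_cases hx0 : x = 0
      · rw [hx0]; exact (AddSubmonoid.closure (atoms M)).zero_mem
      by_cases hatom : x ∈ atoms M
      · exact AddSubmonoid.subset_closure hatom
      · have hdec : ∃ u v : ℚ, u ∈ M ∧ v ∈ M ∧ x = u + v ∧ u ≠ 0 ∧ v ≠ 0 := by
          simp only [atoms, Set.mem_setOf_eq, not_and] at hatom
          have := hatom hx hx0
          push_neg at this
          obtain ⟨u, v, hu, hv, heq, hne⟩ := this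
          exact ⟨u, v, hu, hv, heq, hne⟩
        obtain ⟨u, v, hu, hv, heq, hu0, hv0⟩ := hdec
        have hεu := hεle u hu hu0
        have hεv := hεle v hv hv0
        have h1 : u < n * ε := by push_cast at hxn ⊢; linarith
        have h2 : v < n * ε := by push_cast at hxn ⊢; linarith
        rw [heq]
        exact AddSubmonoid.add_mem _ (ih hu h1) (ih hv h2)
end

section
/- Let r, s be real numbers with 0 < r < s < 2r, and let M be the Puiseux monoid generated by the set (r, s) ∩ ℚ of rationals in the open interval (r, s). Then M is atomic and 𝒜(M) = (r, s) ∩ ℚ. -/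
open Set

/-- For reals 0 < r < s < 2r, the Puiseux monoid generated by the
rationals in (r,s) is atomic with set of atoms exactly (r,s) ∩ ℚ. -/
theorem stmt5 (r s : ℝ) (hr : 0 < r) (hrs : r < s) (hs2 : s < 2 * r)
    (S : Set ℚ) (hS : S = {q : ℚ | r < (q : ℝ) ∧ (q : ℝ) < s})
    (M : AddSubmonoid ℚ) (hM : M = AddSubmonoid.closure S) :
    IsAtomicMonoid M ∧ atoms M = S := by
  subst hM
  have hpos : ∀ x ∈ AddSubmonoid.closure S, x = 0 ∨ r < (x : ℝ) := by
    intro x hx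
    induction hx using AddSubmonoid.closure_induction with
    | mem q hq => rw [hS] at hq; exact Or.inr hq.1
    | zero => exact Or.inl rfl
    | add a b _ _ iha ihb =>
      rcases iha with rfl | iha <;> rcases ihb with rfl | ihb
      · simp
      · right; simpa using ihb
      · right; simpa using iha
      · right; push_cast; linarith
  have key : ∀ x ∈ AddSubmonoid.closure S, x ∈ S ∨ x = 0 ∨
      ∃ u v : ℚ, u ∈ AddSubmonoid.closure S ∧ v ∈ AddSubmonoid.closure S ∧
        u ≠ 0 ∧ v ≠ 0 ∧ x = u + v := by
    intro x hx
    have : x ∈ AddSubmonoid.closure S ∧ (x ∈ S ∨ x = 0 ∨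
        ∃ u v : ℚ, u ∈ AddSubmonoid.closure S ∧ v ∈ AddSubmonoid.closure S ∧
          u ≠ 0 ∧ v ≠ 0 ∧ x = u + v) := by
      induction hx using AddSubmonoid.closure_induction with
      | mem q hq => exact ⟨AddSubmonoid.subset_closure hq, Or.inl hq⟩
      | zero => exact ⟨zero_mem _, Or.inr (Or.inl rfl)⟩
      | add a b _ _ iha ihb =>
        refine ⟨add_mem iha.1 ihb.1, ?_⟩
        by_cases ha0 : a = 0
        · subst ha0; simpa using ihb.2
        by_cases hb0 : b = 0
        · subst hb0; simpa using iha.2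
        exact Or.inr (Or.inr ⟨a, b, iha.1, ihb.1, ha0, hb0, rfl⟩)
    exact this.2
  have hset : atoms (AddSubmonoid.closure S) = S := by
    ext a
    constructor
    · rintro ⟨haM, ha0, hatom⟩
      rcases key a haM with h | h | ⟨u, v, hu, hv, hu0, hv0, heq⟩
      · exact h
      · exact absurd h ha0
      · rcases hatom u v hu hv heq with h | h
        · exact absurd h hu0
        · exact absurd h hv0
    · intro ha
      have har : r < (a : ℝ) ∧ (a : ℝ) < s := by rw [hS] at ha; exact ha
      refine ⟨AddSubmonoid.subset_closure ha, ?_, ?_⟩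
      · intro h0
        rw [h0] at har
        exact absurd har.1 (by simpa using hr.le)
      · intro u v hu hv heq
        by_contra hcon
        push_neg at hcon
        rcases hpos u hu with rfl | hur
        · exact hcon.1 rfl
        rcases hpos v hv with rfl | hvr
        · exact hcon.2 rfl
        have : (a : ℝ) = (u : ℝ) + (v : ℝ) := by exact_mod_cast congrArg (fun q : ℚ => (q : ℝ)) heq
        linarith [har.2]
    
  refine ⟨?_, hset⟩
  unfold IsAtomicMonoid
  rw [hset]
end

section
/- There exists an atomic Puiseux monoid M whose set of atoms 𝒜(M) is dense in ℝ≥0. -/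
open Set

noncomputable def pp (n : ℕ) : ℕ := Nat.nth Nat.Prime n
def tt (n : ℕ) : ℚ := (n.unpair.1.unpair.1 : ℚ) / (n.unpair.1.unpair.2 + 1)
noncomputable def kk (n : ℕ) : ℕ := ⌈tt n * pp n⌉₊
noncomputable def aa (n : ℕ) : ℕ := if pp n ∣ (kk n + 1) then kk n + 2 else kk n + 1
noncomputable def qq (n : ℕ) : ℚ := (aa n : ℚ) / (pp n : ℚ)
noncomputable def MM : AddSubmonoid ℚ := AddSubmonoid.closure (Set.range qq)

lemma pp_prime (n : ℕ) : Nat.Prime (pp n) := Nat.prime_nth_prime n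
lemma pp_sm : StrictMono pp := Nat.nth_strictMono Nat.infinite_setOf_prime
lemma le_pp (n : ℕ) : n ≤ pp n := pp_sm.le_apply
lemma pp_pos (n : ℕ) : 0 < pp n := (pp_prime n).pos
lemma tt_nonneg (n : ℕ) : 0 ≤ tt n := by unfold tt; positivity

lemma not_dvd_aa (n : ℕ) : ¬ pp n ∣ aa n := by
  unfold aa
  split_ifs with h
  · intro h2
    have hd := Nat.dvd_sub h2 h
    simp only [Nat.add_sub_cancel_left, Nat.succ_sub_succ] at hd
    have : pp n ∣ 1 := by simpa using hd
    exact Nat.Prime.one_lt (pp_prime n) |>.ne' (Nat.eq_one_of_dvd_one this)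
  · exact h

lemma aa_pos (n : ℕ) : 0 < aa n := by
  unfold aa; split_ifs <;> omega

lemma qq_pos (n : ℕ) : 0 < qq n := by
  unfold qq
  apply div_pos
  · exact_mod_cast aa_pos n
  · exact_mod_cast pp_pos n

lemma tt_lt_qq (n : ℕ) : tt n < qq n := by
  have hp : (0:ℚ) < (pp n : ℚ) := by exact_mod_cast pp_pos n
  rw [qq, lt_div_iff₀ hp]
  have h1 : tt n * pp n ≤ (kk n : ℚ) := Nat.le_ceil _
  have h2 : (kk n : ℚ) < aa n := by
    have : kk n < aa n := by unfold aa; split_ifs <;> omega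
    exact_mod_cast this
  linarith

lemma qq_le (n : ℕ) : qq n ≤ tt n + 3 / pp n := by
  have hp : (0:ℚ) < (pp n : ℚ) := by exact_mod_cast pp_pos n
  rw [qq, div_le_iff₀ hp]
  have h0 : (0:ℚ) ≤ tt n * pp n := mul_nonneg (tt_nonneg n) hp.le
  have h1 : ((kk n : ℚ)) < tt n * pp n + 1 := Nat.ceil_lt_add_one h0
  have h2 : (aa n : ℚ) ≤ (kk n : ℚ) + 2 := by
    have : aa n ≤ kk n + 2 := by unfold aa; split_ifs <;> omega
    exact_mod_cast this
  have : (tt n + 3 / pp n) * pp n = tt n * pp n + 3 := by field_simp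
  rw [this]; linarith

lemma MM_nonneg : ∀ x ∈ MM, 0 ≤ x := by
  intro x hx
  induction hx using AddSubmonoid.closure_induction with
  | mem y hy => obtain ⟨n, rfl⟩ := hy; exact (qq_pos n).le
  | zero => exact le_refl 0
  | add a b _ _ ha hb => linarith

lemma val_qq (n : ℕ) : padicValRat (pp n) (qq n) = -1 := by
  haveI : Fact (Nat.Prime (pp n)) := ⟨pp_prime n⟩
  have ha : ((aa n : ℚ)) ≠ 0 := by exact_mod_cast (aa_pos n).ne'
  have hp : ((pp n : ℚ)) ≠ 0 := by exact_mod_cast (pp_pos n).ne'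
  rw [qq, padicValRat.div ha hp, padicValRat.of_nat, padicValRat.of_nat,
    padicValNat.eq_zero_of_not_dvd (not_dvd_aa n), padicValNat.self (pp_prime n).one_lt]
  simp

lemma val_qq_other {m n : ℕ} (h : m ≠ n) : 0 ≤ padicValRat (pp n) (qq m) := by
  haveI : Fact (Nat.Prime (pp n)) := ⟨pp_prime n⟩
  have ha : ((aa m : ℚ)) ≠ 0 := by exact_mod_cast (aa_pos m).ne'
  have hp : ((pp m : ℚ)) ≠ 0 := by exact_mod_cast (pp_pos m).ne'
  have hnd : ¬ pp n ∣ pp m := by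
    intro hd
    exact h ((pp_sm.injective) ((Nat.prime_dvd_prime_iff_eq (pp_prime n) (pp_prime m)).mp hd).symm)
  rw [qq, padicValRat.div ha hp, padicValRat.of_nat, padicValRat.of_nat,
    padicValNat.eq_zero_of_not_dvd hnd]
  simp

/-- Key lemma: if x ∈ MM has negative (pp n)-adic valuation then qq n ≤ x. -/
lemma key (n : ℕ) : ∀ x ∈ MM, padicValRat (pp n) x < 0 → qq n ≤ x := by
  haveI : Fact (Nat.Prime (pp n)) := ⟨pp_prime n⟩
  intro x hx
  induction hx using AddSubmonoid.closure_induction with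
  | mem y hy =>
      intro hv
      obtain ⟨m, rfl⟩ := hy
      rcases eq_or_ne m n with rfl | hmn
      · exact le_refl _
      · exact absurd hv (not_lt.2 (val_qq_other hmn))
  | zero =>
      intro hv
      simp [padicValRat] at hv
  | add a b ha hb iha ihb =>
      intro hv
      rcases eq_or_ne a 0 with rfl | ha0
      · simpa using ihb (by simpa using hv)
      rcases eq_or_ne b 0 with rfl | hb0
      · simpa using iha (by simpa using hv)
      have hab : a + b ≠ 0 := by
        have := MM_nonneg a ha
        have := MM_nonneg b hb
        intro h; apply ha0; nlinarith [lt_of_le_of_ne (MM_nonneg a ha) (Ne.symm ha0)]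
      have hmin := padicValRat.min_le_padicValRat_add (p := pp n) hab
      have : padicValRat (pp n) a < 0 ∨ padicValRat (pp n) b < 0 := by
        by_contra hc
        push_neg at hc
        have : (0:ℤ) ≤ padicValRat (pp n) a ⊓ padicValRat (pp n) b := le_min hc.1 hc.2
        omega
      rcases this with h | h
      · have := iha h
        have := MM_nonneg b hb
        linarith
      · have := ihb h
        have := MM_nonneg a ha
        linarith

lemma qq_atom (n : ℕ) : qq n ∈ atoms MM := by
  refine ⟨AddSubmonoid.subset_closure ⟨n, rfl⟩, (qq_pos n).ne', ?_⟩
  intro u v hu hv heq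
  haveI : Fact (Nat.Prime (pp n)) := ⟨pp_prime n⟩
  have hval : padicValRat (pp n) (u + v) < 0 := by rw [← heq, val_qq]; norm_num
  rcases eq_or_ne u 0 with rfl | hu0
  · exact Or.inl rfl
  rcases eq_or_ne v 0 with rfl | hv0
  · exact Or.inr rfl
  have hmin := padicValRat.min_le_padicValRat_add (p := pp n) (q := u) (r := v)
    (by rw [← heq]; exact (qq_pos n).ne')
  have : padicValRat (pp n) u < 0 ∨ padicValRat (pp n) v < 0 := by
    by_contra hc
    push_neg at hc
    have : (0:ℤ) ≤ padicValRat (pp n) u ⊓ padicValRat (pp n) v := le_min hc.1 hc.2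
    omega
  rcases this with h | h
  · right
    have h1 := key n u hu h
    have h2 := MM_nonneg v hv
    linarith [heq ▸ h1]
  · left
    have h1 := key n v hv h
    have h2 := MM_nonneg u hu
    linarith [heq ▸ h1]

lemma tt_hits (r : ℚ) (hr : 0 ≤ r) (N : ℕ) : ∃ n ≥ N, tt n = r := by
  refine ⟨Nat.pair (Nat.pair r.num.toNat (r.den - 1)) N, Nat.right_le_pair _ _, ?_⟩
  unfold tt
  simp only [Nat.unpair_pair]
  have hden : ((r.den - 1 : ℕ) : ℚ) + 1 = (r.den : ℚ) := by
    have := r.pos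
    push_cast [Nat.cast_sub (by omega : 1 ≤ r.den)]
    ring
  have hnum : ((r.num.toNat : ℕ) : ℚ) = (r.num : ℚ) := by
    have : 0 ≤ r.num := Rat.num_nonneg.mpr hr
    exact_mod_cast congrArg (Int.cast : ℤ → ℚ) (Int.toNat_of_nonneg this)
  rw [hden, hnum, Rat.num_div_den]

/-- There exists an atomic Puiseux monoid whose set of atoms is dense
in ℝ≥0. -/
theorem stmt7 :
    ∃ M : AddSubmonoid ℚ, IsPuiseux M ∧ IsAtomicMonoid M ∧
      DenseInNonneg (coeR (atoms M)) := by
  refine ⟨MM, MM_nonneg, ?_, ?_⟩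
  · apply le_antisymm
    · rw [AddSubmonoid.closure_le]; intro x hx; exact hx.1
    · exact AddSubmonoid.closure_mono (fun x hx => by obtain ⟨n, rfl⟩ := hx; exact qq_atom n)
  · intro x hx
    rw [Metric.mem_closure_iff]
    intro ε hε
    obtain ⟨r, hr1, hr2⟩ := exists_rat_btwn (show x < x + ε/2 by linarith)
    have hrpos : 0 ≤ r := by exact_mod_cast le_trans hx hr1.le
    obtain ⟨N, hN⟩ := exists_nat_gt (6/ε)
    obtain ⟨n, hn, htn⟩ := tt_hits r hrpos (N+1)
    refine ⟨qq n, ⟨qq n, qq_atom n, rfl⟩, ?_⟩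
    have h1 : tt n < qq n := tt_lt_qq n
    have h2 : qq n ≤ tt n + 3 / pp n := qq_le n
    have hpn : (N:ℝ) < pp n := by
      have : N + 1 ≤ pp n := le_trans hn (le_pp n)
      exact_mod_cast Nat.lt_of_lt_of_le (Nat.lt_succ_self N) this
    have hppos : (0:ℝ) < pp n := lt_of_le_of_lt (by positivity) hpn
    have h3 : (3 : ℝ) / pp n < ε / 2 := by
      rw [div_lt_iff₀ hppos]
      have h6 : 6 / ε < (pp n : ℝ) := lt_trans hN hpn
      have : 6 < ε * pp n := by
        rw [div_lt_iff₀ hε] at h6; linarith [h6]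
      linarith
    have hq1 : (r:ℝ) < (qq n : ℝ) := by rw [← htn]; exact_mod_cast h1
    have hq2 : (qq n : ℝ) ≤ r + 3 / pp n := by
      have := h2; rw [htn] at this
      have : ((qq n : ℚ):ℝ) ≤ ((r + 3 / pp n : ℚ) : ℝ) := by exact_mod_cast this
      simpa using this
    rw [Real.dist_eq, abs_lt]
    constructor <;> nlinarith
end

section
/- A Puiseux monoid M is eventually dense if and only if it is somewhere dense. That is, there exists r ≥ 0 such that M is dense in the interval (r, ∞) if and only if there exist real numbers 0 ≤ r < s such that M is dense in the open interval (r, s). -/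
open Set

private lemma open_inter_closure {U A : Set ℝ} (hU : IsOpen U) :
    U ∩ closure A ⊆ closure (A ∩ U) := by
  intro x hx
  rw [Set.inter_comm A U]
  exact hU.inter_closure hx

theorem stmt8_aux (M : AddSubmonoid ℚ) :
    (∃ r : ℝ, 0 ≤ r ∧ Set.Ioi r ⊆ closure (coeR (M : Set ℚ) ∩ Set.Ioi r)) ↔
    (∃ r s : ℝ, 0 ≤ r ∧ r < s ∧ Set.Ioo r s ⊆ closure (coeR (M : Set ℚ) ∩ Set.Ioo r s)) := by
  set A := coeR (M : Set ℚ) with hA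
  constructor
  · rintro ⟨r, hr0, hr⟩
    refine ⟨r, r + 1, hr0, by linarith, fun x hx => ?_⟩
    have h1 : x ∈ closure (A ∩ Set.Ioi r) := hr hx.1
    have h2 : x ∈ closure ((A ∩ Set.Ioi r) ∩ Set.Ioo r (r + 1)) :=
      open_inter_closure isOpen_Ioo ⟨hx, h1⟩
    refine closure_mono (fun y hy => ?_) h2
    exact ⟨hy.1.1, hy.2⟩
  · rintro ⟨r, s, hr0, hrs, hd⟩
    have hs0 : 0 < s := lt_of_le_of_lt hr0 hrs
    -- closure A is closed under addition
    have hadd : ∀ a b : ℝ, a ∈ closure A → b ∈ closure A → a + b ∈ closure A := by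
      intro a b ha hb
      have hsub : A = ((AddSubmonoid.map (Rat.castHom ℝ).toAddMonoidHom M : AddSubmonoid ℝ) : Set ℝ) := by
        ext x; simp [hA, coeR, AddSubmonoid.mem_map]
      rw [hsub] at ha hb ⊢
      exact (AddSubmonoid.map (Rat.castHom ℝ).toAddMonoidHom M).topologicalClosure.add_mem ha hb
    have hbase : Set.Ioo r s ⊆ closure A :=
      fun x hx => closure_mono Set.inter_subset_left (hd hx)
    have hkey : ∀ k : ℕ, ∀ x : ℝ, ((k : ℝ) + 1) * r < x → x < ((k : ℝ) + 1) * s →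
        x ∈ closure A := by
      intro k
      induction k with
      | zero =>
        intro x h1 h2
        norm_num at h1 h2
        exact hbase ⟨h1, h2⟩
      | succ k ih =>
        intro x h1 h2
        push_cast at h1 h2
        have hk2 : (0 : ℝ) < (k : ℝ) + 2 := by positivity
        set b := x / ((k : ℝ) + 2) with hbdef
        have hb : b * ((k : ℝ) + 2) = x := by rw [hbdef]; field_simp
        have hrb : r < b := by nlinarith
        have hbs : b < s := by nlinarith
        have ha1 : ((k : ℝ) + 1) * r < x - b := by nlinarith
        have ha2 : x - b < ((k : ℝ) + 1) * s := by nlinarith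
        have := hadd _ _ (ih (x - b) ha1 ha2) (hbase ⟨hrb, hbs⟩)
        have hxx : x - b + b = x := by ring
        rwa [hxx] at this
    refine ⟨r * s / (s - r), div_nonneg (mul_nonneg hr0 hs0.le) (by linarith), fun x hx => ?_⟩
    simp only [Set.mem_Ioi] at hx
    have hR0 : 0 ≤ r * s / (s - r) := div_nonneg (mul_nonneg hr0 hs0.le) (by linarith)
    have hx0 : 0 < x := lt_of_le_of_lt hR0 hx
    have hrsx : r * s < x * (s - r) := (div_lt_iff₀ (by linarith)).mp hx
    set n := ⌊x / s⌋₊ with hn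
    have hfl : (n : ℝ) ≤ x / s := Nat.floor_le (div_nonneg hx0.le hs0.le)
    have hns : (n : ℝ) * s ≤ x := by
      rw [← le_div_iff₀ hs0]; exact hfl
    have h2 : x < ((n : ℝ) + 1) * s := by
      have := Nat.lt_floor_add_one (x / s)
      rw [div_lt_iff₀ hs0] at this
      exact_mod_cast this
    have h1 : ((n : ℝ) + 1) * r < x := by
      nlinarith [mul_le_mul_of_nonneg_right hns hr0]
    have hxc : x ∈ closure A := hkey n x h1 h2
    have := open_inter_closure isOpen_Ioi ⟨hx, hxc⟩
    exact this

/-- A Puiseux monoid is eventually dense iff it is somewhere dense. -/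
theorem stmt8 (M : AddSubmonoid ℚ) (hM : IsPuiseux M) :
    EventuallyDense (coeR (M : Set ℚ)) ↔ SomewhereDenseNonneg (coeR (M : Set ℚ)) :=
  stmt8_aux M
end

section
/- Let M be a Puiseux monoid. If the set of atoms 𝒜(M) is somewhere dense in ℝ≥0, then M is eventually dense. -/
open Set

/-- If the set of atoms of a Puiseux monoid `M` is somewhere dense
in ℝ≥0, then `M` is eventually dense. -/
theorem stmt9 (M : AddSubmonoid ℚ) (hM : IsPuiseux M)
    (h : SomewhereDenseNonneg (coeR (atoms M))) :
    EventuallyDense (coeR (M : Set ℚ)) := by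
  obtain ⟨r, s, hr0, hrs, hd⟩ := h
  have hs0 : 0 < s := lt_of_le_of_lt hr0 hrs
  -- the real image of M as a submonoid of ℝ
  set M' : AddSubmonoid ℝ := AddSubmonoid.map (Rat.castHom ℝ).toAddMonoidHom M with hM'
  have hM'coe : (M' : Set ℝ) = coeR (M : Set ℚ) := rfl
  set C : AddSubmonoid ℝ := M'.topologicalClosure with hCdef
  have hCcoe : (C : Set ℝ) = closure (coeR (M : Set ℚ)) := by
    rw [← hM'coe]; rfl
  -- Step 1 : Ioo r s ⊆ C
  have step1 : Set.Ioo r s ⊆ (C : Set ℝ) := by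
    intro x hx
    have h1 : x ∈ closure (coeR (atoms M) ∩ Set.Ioo r s) := hd hx
    have h2 : coeR (atoms M) ∩ Set.Ioo r s ⊆ coeR (M : Set ℚ) := by
      rintro y ⟨⟨q, hq, rfl⟩, -⟩
      exact ⟨q, hq.1, rfl⟩
    rw [hCcoe]
    exact closure_mono h2 h1
  -- Step 2 : for n ≥ 1, Ioo (n r) (n s) ⊆ C
  have step2 : ∀ n : ℕ, Set.Ioo ((n + 1 : ℕ) * r) ((n + 1 : ℕ) * s) ⊆ (C : Set ℝ) := by
    intro n
    induction n with
    | zero => simpa using step1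
    | succ n ih =>
      intro x hx
      obtain ⟨hx1, hx2⟩ := hx
      push_cast at hx1 hx2
      set a : ℝ := max ((n + 1 : ℝ) * r) (x - s) with ha
      set b : ℝ := min ((n + 1 : ℝ) * s) (x - r) with hb
      have hab : a < b := by
        apply max_lt
        · apply lt_min
          · nlinarith
          · nlinarith
        · apply lt_min
          · nlinarith
          · linarith
      set u : ℝ := (a + b) / 2 with hu
      have hua : a < u := by
        rw [hu]; linarith
      have hub : u < b := by
        rw [hu]; linarith
      have hu1 : u ∈ Set.Ioo ((n + 1 : ℝ) * r) ((n + 1 : ℝ) * s) :=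
        ⟨lt_of_le_of_lt (le_max_left _ _) hua, lt_of_lt_of_le hub (min_le_left _ _)⟩
      have hu2 : x - u ∈ Set.Ioo r s := by
        constructor
        · have := lt_of_lt_of_le hub (min_le_right _ _); linarith
        · have := lt_of_le_of_lt (le_max_right _ _) hua; linarith
      have huC : u ∈ C := by
        apply ih
        push_cast
        exact hu1
      have hxuC : x - u ∈ C := step1 hu2
      have : u + (x - u) ∈ C := C.add_mem huC hxuC
      simpa using this
  -- Step 3 : choose N with N * (s - r) > r
  obtain ⟨N, hN⟩ := exists_nat_gt (r / (s - r))
  have hsr : (0 : ℝ) < s - r := by linarith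
  have hNr : r < (N : ℝ) * (s - r) := by
    rw [div_lt_iff₀ hsr] at hN; linarith [hN]
  refine ⟨(N : ℝ) * r, mul_nonneg (Nat.cast_nonneg N) hr0, ?_⟩
  intro x hx
  have hx' : (N : ℝ) * r < x := hx
  -- find n ≥ N with n*r < x < n*s, n ≥ 1
  have hxC : x ∈ closure (coeR (M : Set ℚ)) := by
    have hex : ∃ m : ℕ, x < ((N + m : ℕ) : ℝ) * s := by
      obtain ⟨m, hm⟩ := exists_nat_gt (x / s)
      refine ⟨m, ?_⟩
      have : x < (m : ℝ) * s := by
        rw [div_lt_iff₀ hs0] at hm; linarith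
      have hle : (m : ℝ) ≤ ((N + m : ℕ) : ℝ) := by push_cast; linarith [Nat.cast_nonneg (α := ℝ) N]
      calc x < (m : ℝ) * s := this
        _ ≤ ((N + m : ℕ) : ℝ) * s := by nlinarith
    set m := Nat.find hex with hmdef
    have hmlt : x < ((N + m : ℕ) : ℝ) * s := Nat.find_spec hex
    have hmgt : ((N + m : ℕ) : ℝ) * r < x := by
      rcases Nat.eq_zero_or_pos m with hm0 | hm0
      · rw [hm0]; push_cast; linarith
      · have hprev : ¬ x < ((N + (m - 1) : ℕ) : ℝ) * s := Nat.find_min hex (by omega)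
        push_neg at hprev
        have hk : ((N + (m - 1) : ℕ) : ℝ) = ((N + m : ℕ) : ℝ) - 1 := by
          have : N + (m - 1) + 1 = N + m := by omega
          push_cast [← this]; ring
        rw [hk] at hprev
        have hkgeN : (N : ℝ) ≤ ((N + m : ℕ) : ℝ) - 1 := by
          have : (1 : ℝ) ≤ (m : ℝ) := by exact_mod_cast hm0
          push_cast; linarith
        nlinarith
    -- now x ∈ Ioo ((N+m) r) ((N+m) s)
    have hNm1 : 1 ≤ N + m := by
      rcases Nat.eq_zero_or_pos (N + m) with h0 | h1
      · exfalso
        have : ((N + m : ℕ) : ℝ) = 0 := by exact_mod_cast congrArg (Nat.cast (R := ℝ)) h0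
        rw [this] at hmlt hmgt
        simp at hmlt hmgt
        linarith
      · exact h1
    have := step2 (N + m - 1) (by
      have : N + m - 1 + 1 = N + m := by omega
      rw [this]
      exact ⟨hmgt, hmlt⟩)
    rw [hCcoe] at this
    exact this
  -- conclude: x ∈ closure (coeR M ∩ Ioi (N r))
  have hopen : IsOpen (Set.Ioi ((N : ℝ) * r)) := isOpen_Ioi
  have := hopen.inter_closure (t := coeR (M : Set ℚ)) ⟨hx', hxC⟩
  rwa [Set.inter_comm] at this
end

section
/- There exists an atomic Puiseux monoid M such that the set of atoms 𝒜(M) is nowhere dense in ℝ≥0, yet M itself is somewhere dense in ℝ≥0 (indeed, M is dense in the interval [2, 4]). -/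
open Set

/-- Rationals with finite ternary expansion using digits 0 and 2 (Cantor-type rationals). -/
inductive InR : ℚ → Prop
  | zero : InR 0
  | lo {q : ℚ} : InR q → InR (q / 3)
  | hi {q : ℚ} : InR q → InR (2/3 + q / 3)

lemma InR.nonneg {q : ℚ} (h : InR q) : 0 ≤ q := by
  induction h with
  | zero => exact le_refl 0
  | lo _ ih => linarith
  | hi _ ih => linarith

lemma InR.lt_one {q : ℚ} (h : InR q) : q < 1 := by
  induction h with
  | zero => norm_num
  | lo _ ih => linarith
  | hi _ ih => linarith

lemma no_gap_unit {v : ℚ} (h0 : 0 ≤ v) (h1 : v < 1) (k : ℤ) :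
    ¬((3*(k:ℚ)+1 < v) ∧ (v < 3*(k:ℚ)+2)) := by
  rintro ⟨ha, hb⟩
  have h2 : (3*k+1 : ℤ) < 1 := by exact_mod_cast (by push_cast; linarith : ((3*k+1 : ℤ) : ℚ) < 1)
  have h3 : (0 : ℤ) < 3*k+2 := by exact_mod_cast (by push_cast; linarith : (0:ℚ) < ((3*k+2 : ℤ) : ℚ))
  omega

lemma no_gap_two {v : ℚ} (h0 : 2 ≤ v) (h1 : v < 3) (k : ℤ) :
    ¬((3*(k:ℚ)+1 < v) ∧ (v < 3*(k:ℚ)+2)) := by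
  rintro ⟨ha, hb⟩
  have h2 : (3*k+1 : ℤ) < 3 := by exact_mod_cast (by push_cast; linarith : ((3*k+1 : ℤ) : ℚ) < 3)
  have h3 : (2 : ℤ) < 3*k+2 := by exact_mod_cast (by push_cast; linarith : (2:ℚ) < ((3*k+2 : ℤ) : ℚ))
  omega

lemma InR.gap {q : ℚ} (h : InR q) : ∀ (n : ℕ) (k : ℤ),
    ¬((3*(k:ℚ)+1 < 3^n * q) ∧ (3^n * q < 3*(k:ℚ)+2)) := by
  induction h with
  | zero =>
    intro n k ⟨h1, h2⟩
    rw [mul_zero] at h1 h2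
    exact no_gap_unit le_rfl one_pos k ⟨h1, h2⟩
  | @lo q hq ih =>
    intro n k
    match n with
    | 0 =>
      have := hq.nonneg; have := hq.lt_one
      simpa using no_gap_unit (by linarith : (0:ℚ) ≤ q/3) (by linarith) k
    | (m+1) =>
      rintro ⟨h1, h2⟩
      have e : (3:ℚ)^(m+1) * (q/3) = 3^m * q := by ring
      rw [e] at h1 h2
      exact ih m k ⟨h1, h2⟩
  | @hi q hq ih =>
    intro n k
    have hq0 := hq.nonneg; have hq1 := hq.lt_one
    match n with
    | 0 =>
      simpa using no_gap_unit (by linarith : (0:ℚ) ≤ 2/3 + q/3) (by linarith) k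
    | 1 =>
      have e : (3:ℚ)^1 * (2/3 + q/3) = 2 + q := by ring
      rw [e]
      exact no_gap_two (by linarith) (by linarith) k
    | (m+2) =>
      rintro ⟨h1, h2⟩
      have e : (3:ℚ)^(m+2) * (2/3 + q/3) = 2*3^(m+1) + 3^(m+1) * q := by ring
      rw [e] at h1 h2
      refine ih (m+1) (k - 2*3^m) ⟨?_, ?_⟩
      · push_cast
        have e2 : (3:ℚ)^(m+1) = 3 * 3^m := by ring
        linarith
      · push_cast
        have e2 : (3:ℚ)^(m+1) = 3 * 3^m := by ring
        linarith

def Aset : Set ℚ := {x | ∃ q, InR q ∧ x = 1 + q}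

def Mmon : AddSubmonoid ℚ := AddSubmonoid.closure Aset

lemma Aset_bounds {x : ℚ} (hx : x ∈ Aset) : 1 ≤ x ∧ x < 2 := by
  obtain ⟨q, hq, rfl⟩ := hx
  exact ⟨by linarith [hq.nonneg], by linarith [hq.lt_one]⟩

lemma M_ge {x : ℚ} (hx : x ∈ Mmon) : x = 0 ∨ 1 ≤ x := by
  induction hx using AddSubmonoid.closure_induction with
  | mem x hx => exact Or.inr (Aset_bounds hx).1
  | zero => exact Or.inl rfl
  | add x y _ _ px py =>
    rcases px with rfl | px
    · simpa using py
    · rcases py with rfl | py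
      · exact Or.inr (by simpa using px)
      · exact Or.inr (by linarith)

lemma M_decomp {x : ℚ} (hx : x ∈ Mmon) :
    x = 0 ∨ ∃ u ∈ Aset, ∃ v ∈ Mmon, x = u + v := by
  induction hx using AddSubmonoid.closure_induction with
  | mem x hx => exact Or.inr ⟨x, hx, 0, zero_mem _, (add_zero x).symm⟩
  | zero => exact Or.inl rfl
  | add x y hx hy px py =>
    rcases px with rfl | ⟨u, hu, v, hv, rfl⟩
    · rcases py with rfl | ⟨u, hu, v, hv, rfl⟩
      · exact Or.inl (by ring)
      · exact Or.inr ⟨u, hu, v, hv, by rw [zero_add]⟩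
    · exact Or.inr ⟨u, hu, v + y, add_mem hv hy, by ring⟩

lemma atoms_Mmon : atoms Mmon = Aset := by
  ext a
  constructor
  · rintro ⟨haM, hne, hirr⟩
    rcases M_decomp haM with rfl | ⟨u, hu, v, hv, rfl⟩
    · exact absurd rfl hne
    · rcases hirr u v (AddSubmonoid.subset_closure hu) hv rfl with h0 | h0
      · have := (Aset_bounds hu).1; linarith [h0 ▸ this]
      · rw [h0, add_zero]; exact hu
  · intro ha
    obtain ⟨h1, h2⟩ := Aset_bounds ha
    refine ⟨AddSubmonoid.subset_closure ha, by intro h; rw [h] at h1; linarith, ?_⟩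
    intro u v hu hv heq
    rcases M_ge hu with h | h
    · exact Or.inl h
    rcases M_ge hv with h' | h'
    · exact Or.inr h'
    · exfalso; linarith [heq ▸ h2]

lemma mem_Mmon {x y : ℚ} (hx : InR x) (hy : InR y) : (2 + x + y : ℚ) ∈ Mmon := by
  have e : (2 + x + y : ℚ) = (1 + x) + (1 + y) := by ring
  rw [e]
  exact add_mem (AddSubmonoid.subset_closure ⟨x, hx, rfl⟩)
    (AddSubmonoid.subset_closure ⟨y, hy, rfl⟩)

lemma approx : ∀ (N : ℕ) (u : ℝ), 0 ≤ u → u ≤ 2 →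
    ∃ x y : ℚ, InR x ∧ InR y ∧ (x:ℝ) + (y:ℝ) ≤ u ∧ u - ((x:ℝ) + (y:ℝ)) ≤ 2/3^N := by
  intro N
  induction N with
  | zero => intro u h0 h2; exact ⟨0, 0, .zero, .zero, by simpa, by simpa⟩
  | succ N ih =>
    intro u h0 h2
    have e3 : (2:ℝ)/3^(N+1) = (2/3^N)/3 := by rw [pow_succ]; ring
    rcases le_or_gt u (2/3) with h | h
    · obtain ⟨x, y, hx, hy, hle, herr⟩ := ih (3*u) (by linarith) (by linarith)
      refine ⟨x/3, y/3, hx.lo, hy.lo, by push_cast; linarith, by push_cast; linarith⟩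
    rcases le_or_gt u (4/3) with h' | h'
    · obtain ⟨x, y, hx, hy, hle, herr⟩ := ih (3*u - 2) (by linarith) (by linarith)
      refine ⟨2/3 + x/3, y/3, hx.hi, hy.lo, by push_cast; linarith, by push_cast; linarith⟩
    · obtain ⟨x, y, hx, hy, hle, herr⟩ := ih (3*u - 4) (by linarith) (by linarith)
      refine ⟨2/3 + x/3, 2/3 + y/3, hx.hi, hy.hi, by push_cast; linarith,
        by push_cast; linarith⟩

lemma exists_pow_small {δ : ℝ} (hδ : 0 < δ) : ∃ N : ℕ, (2:ℝ)/3^N < δ := by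
  obtain ⟨N, hN⟩ := pow_unbounded_of_one_lt (R := ℝ) (2/δ) (by norm_num : (1:ℝ) < 3)
  refine ⟨N, ?_⟩
  have h3 : (0:ℝ) < 3^N := by positivity
  rw [div_lt_iff₀ h3]
  rw [div_lt_iff₀ hδ] at hN
  linarith

lemma dense_Icc : Set.Icc (2:ℝ) 4 ⊆ closure (coeR (Mmon : Set ℚ) ∩ Set.Icc (2:ℝ) 4) := by
  intro t ht
  rw [Metric.mem_closure_iff]
  intro ε hε
  obtain ⟨N, hN⟩ := exists_pow_small hε
  obtain ⟨x, y, hx, hy, hle, herr⟩ := approx N (t - 2) (by linarith [ht.1]) (by linarith [ht.2])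
  refine ⟨((2 + x + y : ℚ) : ℝ), ⟨⟨2 + x + y, mem_Mmon hx hy, rfl⟩, ?_, ?_⟩, ?_⟩
  · push_cast
    have := hx.nonneg; have := hy.nonneg
    have hx0 : (0:ℝ) ≤ (x:ℝ) := by exact_mod_cast hx.nonneg
    have hy0 : (0:ℝ) ≤ (y:ℝ) := by exact_mod_cast hy.nonneg
    linarith
  · push_cast
    have hx1 : (x:ℝ) < 1 := by exact_mod_cast hx.lt_one
    have hy1 : (y:ℝ) < 1 := by exact_mod_cast hy.lt_one
    linarith
  · rw [Real.dist_eq, abs_of_nonneg (by push_cast; linarith)]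
    push_cast
    linarith

lemma dense_Ioo : Set.Ioo (2:ℝ) 4 ⊆ closure (coeR (Mmon : Set ℚ) ∩ Set.Ioo (2:ℝ) 4) := by
  intro t ht
  rw [Metric.mem_closure_iff]
  intro ε hε
  have hδ : 0 < min ε (t - 2) := lt_min hε (by linarith [ht.1])
  obtain ⟨N, hN⟩ := exists_pow_small hδ
  obtain ⟨x, y, hx, hy, hle, herr⟩ := approx N (t - 2) (by linarith [ht.1]) (by linarith [ht.2])
  have hNε : (2:ℝ)/3^N < ε := lt_of_lt_of_le hN (min_le_left _ _)
  have hNt : (2:ℝ)/3^N < t - 2 := lt_of_lt_of_le hN (min_le_right _ _)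
  refine ⟨((2 + x + y : ℚ) : ℝ), ⟨⟨2 + x + y, mem_Mmon hx hy, rfl⟩, ?_, ?_⟩, ?_⟩
  · push_cast; linarith
  · push_cast; linarith [ht.2]
  · rw [Real.dist_eq, abs_of_nonneg (by push_cast; linarith)]
    push_cast
    linarith

lemma nowhere_atoms : ∀ r s : ℝ, 0 ≤ r → r < s →
    ¬ (Set.Ioo r s ⊆ closure (coeR Aset ∩ Set.Ioo r s)) := by
  intro r s hr hrs hsub
  have hsr : 0 < s - r := by linarith
  obtain ⟨n0, hn0⟩ := pow_unbounded_of_one_lt (R := ℝ) (4/(s-r)) (by norm_num : (1:ℝ) < 3)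
  set n : ℕ := n0 + 1 with hn
  have h3n : (0:ℝ) < 3^n := by positivity
  have hmono : (3:ℝ)^n0 ≤ 3^n := pow_le_pow_right₀ (by norm_num) (by omega)
  have h3big : 4 + 3^n * r < 3^n * s := by
    have h1 : (4:ℝ)/(s-r) < 3^n := lt_of_lt_of_le hn0 hmono
    rw [div_lt_iff₀ hsr] at h1
    nlinarith
  set j : ℤ := ⌊(3:ℝ)^n * r⌋ + 1 with hj
  set m : ℤ := 3*((j+1)/3) + 1 with hm
  have hm1 : m % 3 = 1 := by omega
  have hjm : j ≤ m ∧ m ≤ j + 2 := by omega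
  have hj1 : (3:ℝ)^n * r < (j:ℝ) := by
    rw [hj]; push_cast; exact Int.lt_floor_add_one _
  have hj2 : (j:ℝ) ≤ 3^n * r + 1 := by
    rw [hj]; push_cast; linarith [Int.floor_le ((3:ℝ)^n * r)]
  have hmr : (3:ℝ)^n * r < (m:ℝ) := lt_of_lt_of_le hj1 (by exact_mod_cast hjm.1)
  have hms : (m:ℝ) + 1 < 3^n * s := by
    have : (m:ℝ) ≤ (j:ℝ) + 2 := by exact_mod_cast hjm.2
    linarith
  set p : ℝ := ((m:ℝ) + 1/2)/3^n with hp
  have hpIoo : p ∈ Set.Ioo r s := by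
    constructor
    · rw [hp, lt_div_iff₀ h3n]; nlinarith
    · rw [hp, div_lt_iff₀ h3n]; nlinarith
  have hgap : ∀ x ∈ coeR Aset, ¬ ((m:ℝ)/3^n < x ∧ x < ((m:ℝ)+1)/3^n) := by
    rintro _ ⟨a, ⟨q, hq, rfl⟩, rfl⟩ ⟨hl, hr'⟩
    beta_reduce at hl hr'
    push_cast at hl hr'
    rw [div_lt_iff₀ h3n] at hl
    rw [lt_div_iff₀ h3n] at hr'
    have hl' : (m:ℚ) < 3^n * (1 + q) := by
      have : ((m:ℚ):ℝ) < (((3:ℚ)^n * (1 + q) : ℚ) : ℝ) := by push_cast; linarith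
      exact_mod_cast this
    have hr'' : 3^n * (1 + q) < (m:ℚ) + 1 := by
      have : (((3:ℚ)^n * (1 + q) : ℚ) : ℝ) < ((m:ℚ):ℝ) + 1 := by push_cast; linarith
      exact_mod_cast this
    obtain ⟨k, hk⟩ : ∃ k : ℤ, m = 3*k + 1 := ⟨m/3, by omega⟩
    refine hq.gap n (k - 3^n0) ⟨?_, ?_⟩
    · have hmq : (m:ℚ) = 3*(k:ℚ) + 1 := by exact_mod_cast congrArg (Int.cast : ℤ → ℚ) hk
      have e2 : (3:ℚ)^n = 3 * 3^n0 := by rw [hn]; ring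
      push_cast
      nlinarith
    · have hmq : (m:ℚ) = 3*(k:ℚ) + 1 := by exact_mod_cast congrArg (Int.cast : ℤ → ℚ) hk
      have e2 : (3:ℚ)^n = 3 * 3^n0 := by rw [hn]; ring
      push_cast
      nlinarith
  have hcl : closure (coeR Aset ∩ Set.Ioo r s) ⊆
      (Set.Ioo ((m:ℝ)/3^n) (((m:ℝ)+1)/3^n))ᶜ := by
    apply closure_minimal
    · rintro x ⟨hx1, _⟩ hxG
      exact hgap x hx1 ⟨hxG.1, hxG.2⟩
    · exact isClosed_compl_iff.mpr isOpen_Ioo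
  refine hcl (hsub hpIoo) ⟨?_, ?_⟩
  · rw [hp, div_lt_div_iff₀ h3n h3n]; nlinarith
  · rw [hp, div_lt_div_iff₀ h3n h3n]; nlinarith

/-- There is an atomic Puiseux monoid whose set of atoms is nowhere
dense in ℝ≥0, yet the monoid itself is somewhere dense (indeed dense in [2,4]). -/
theorem stmt10 :
    ∃ M : AddSubmonoid ℚ, IsPuiseux M ∧ IsAtomicMonoid M ∧
      NowhereDenseNonneg (coeR (atoms M)) ∧
      SomewhereDenseNonneg (coeR (M : Set ℚ)) ∧
      Set.Icc (2 : ℝ) 4 ⊆ closure (coeR (M : Set ℚ) ∩ Set.Icc (2 : ℝ) 4) := by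
  refine ⟨Mmon, ?_, ?_, ?_, ?_, dense_Icc⟩
  · intro x hx
    induction hx using AddSubmonoid.closure_induction with
    | mem x hx => linarith [(Aset_bounds hx).1]
    | zero => exact le_refl 0
    | add x y _ _ px py => exact add_nonneg px py
  · show AddSubmonoid.closure (atoms Mmon) = Mmon
    rw [atoms_Mmon]
    rfl
  · rw [atoms_Mmon]
    exact nowhere_atoms
  · exact ⟨2, 4, by norm_num, by norm_num, dense_Ioo⟩
end

section
/- Let M be a Puiseux monoid. Then M is nowhere dense in ℝ≥0 if and only if every generating set of M is nowhere dense in ℝ≥0. Moreover, if M is nowhere dense, then M is atomic and 𝒜(M) is nowhere dense in ℝ≥0. -/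
open Set

lemma nd_mono {S T : Set ℚ} (h : S ⊆ T) (hT : NowhereDenseNonneg (coeR T)) :
    NowhereDenseNonneg (coeR S) := by
  intro r s hr hrs hsub
  refine hT r s hr hrs (fun x hx => ?_)
  exact closure_mono (inter_subset_inter_left _ (image_mono h)) (hsub hx)

lemma dense_of_small (M : AddSubmonoid ℚ)
    (h : ∀ ε : ℚ, 0 < ε → ∃ q ∈ M, 0 < q ∧ q < ε) :
    Set.Ioo (0:ℝ) 1 ⊆ closure (coeR (M : Set ℚ) ∩ Set.Ioo 0 1) := by
  intro x hx
  rw [Metric.mem_closure_iff]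
  intro δ hδ
  obtain ⟨hx0, hx1⟩ := hx
  set δ' := min δ (1 - x) with hδ'
  have hδ'0 : 0 < δ' := lt_min hδ (by linarith)
  obtain ⟨ε, hε0, hεδ⟩ := exists_rat_btwn hδ'0
  have hε0' : (0:ℚ) < ε := by exact_mod_cast hε0
  obtain ⟨q, hqM, hq0, hqε⟩ := h ε hε0'
  have hq0' : (0:ℝ) < (q:ℝ) := by exact_mod_cast hq0
  set n := ⌈x / (q:ℝ)⌉₊ with hn
  have h1 : x ≤ (n:ℝ) * q := by
    have := Nat.le_ceil (x / (q:ℝ))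
    rw [div_le_iff₀ hq0'] at this
    exact this
  have h2 : (n:ℝ) * q < x + q := by
    have h3 := Nat.ceil_lt_add_one (le_of_lt (div_pos hx0 hq0'))
    have : (n:ℝ) < x / q + 1 := h3
    calc (n:ℝ) * q < (x / q + 1) * q := by nlinarith
    _ = x + q := by field_simp
  have hqδ : (q:ℝ) < δ' := lt_trans (by exact_mod_cast hqε) hεδ
  have hd1 : δ' ≤ δ := min_le_left _ _
  have hd2 : δ' ≤ 1 - x := min_le_right _ _
  refine ⟨(n:ℝ) * q, ⟨⟨(n:ℚ) * q, ?_, by push_cast; ring⟩, ?_, ?_⟩, ?_⟩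
  · have := M.nsmul_mem hqM n
    simpa [nsmul_eq_mul] using this
  · linarith
  · linarith
  · rw [Real.dist_eq, abs_sub_lt_iff]
    constructor <;> linarith

lemma atomic_of_eps (M : AddSubmonoid ℚ) (hM : IsPuiseux M)
    (ε : ℚ) (hε : 0 < ε) (hbd : ∀ q ∈ M, q ≠ 0 → ε ≤ q) :
    IsAtomicMonoid M := by
  have key : ∀ n : ℕ, ∀ x : ℚ, x ∈ M → x < n * ε →
      x ∈ AddSubmonoid.closure (atoms M) := by
    intro n
    induction n with
    | zero =>
      intro x hx hxn
      have := hM x hx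
      simp only [Nat.cast_zero, zero_mul] at hxn
      linarith
    | succ n ih =>
      intro x hx hxn
      by_cases hx0 : x = 0
      · exact hx0 ▸ (AddSubmonoid.closure (atoms M)).zero_mem
      · by_cases hat : x ∈ atoms M
        · exact AddSubmonoid.subset_closure hat
        · have hdec : ∃ u v : ℚ, u ∈ M ∧ v ∈ M ∧ x = u + v ∧ u ≠ 0 ∧ v ≠ 0 := by
            unfold atoms at hat
            simp only [Set.mem_setOf_eq, not_and, not_forall] at hat
            push_neg at hat
            obtain ⟨u, v, hu, hv, hxuv, hu0, hv0⟩ := hat hx hx0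
            exact ⟨u, v, hu, hv, hxuv, hu0, hv0⟩
          obtain ⟨u, v, hu, hv, hxuv, hu0, hv0⟩ := hdec
          have hεu := hbd u hu hu0
          have hεv := hbd v hv hv0
          have hun : u < n * ε := by
            push_cast at hxn ⊢; linarith
          have hvn : v < n * ε := by
            push_cast at hxn ⊢; linarith
          rw [hxuv]
          exact AddSubmonoid.add_mem _ (ih u hu hun) (ih v hv hvn)
  apply le_antisymm
  · exact AddSubmonoid.closure_le.mpr (fun a ha => ha.1)
  · intro x hx
    obtain ⟨n, hn⟩ := exists_nat_gt (x / ε)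
    have hxn : x < n * ε := by
      rw [div_lt_iff₀ hε] at hn; linarith
    exact key n x hx hxn

/-- A Puiseux monoid `M` is nowhere dense in ℝ≥0 iff every
generating set of `M` is nowhere dense in ℝ≥0; moreover, if `M` is nowhere dense
then `M` is atomic and its set of atoms is nowhere dense in ℝ≥0. -/
theorem stmt11 (M : AddSubmonoid ℚ) (hM : IsPuiseux M) :
    (NowhereDenseNonneg (coeR (M : Set ℚ)) ↔
      ∀ S : Set ℚ, S ⊆ (M : Set ℚ) → AddSubmonoid.closure S = M →
        NowhereDenseNonneg (coeR S)) ∧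
    (NowhereDenseNonneg (coeR (M : Set ℚ)) →
      IsAtomicMonoid M ∧ NowhereDenseNonneg (coeR (atoms M))) := by
  constructor
  · constructor
    · intro hnd S hS _
      exact nd_mono hS hnd
    · intro h
      exact h (M : Set ℚ) subset_rfl (AddSubmonoid.closure_eq M)
  · intro hnd
    have hε : ∃ ε : ℚ, 0 < ε ∧ ∀ q ∈ M, q ≠ 0 → ε ≤ q := by
      by_contra hc
      push_neg at hc
      apply hnd 0 1 le_rfl one_pos
      apply dense_of_small M
      intro ε hε
      obtain ⟨q, hqM, hq0, hqε⟩ := hc ε hε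
      exact ⟨q, hqM, lt_of_le_of_ne (hM q hqM) (Ne.symm hq0), hqε⟩
    obtain ⟨ε, hε0, hbd⟩ := hε
    exact ⟨atomic_of_eps M hM ε hε0 hbd, nd_mono (fun a ha => ha.1) hnd⟩
end

section
/- Let M be a Puiseux monoid. Then the root closure M̃ = {x ∈ gp(M) | nx ∈ M for some n ∈ ℕ} is dense in ℝ≥0 if and only if M is not finitely generated. -/
open Set

/-! ### Auxiliary lemmas -/

/-- Every additive submonoid of ℕ is finitely generated. -/
lemma natSubmonoid_fg (S : AddSubmonoid ℕ) :
    ∃ F : Finset ℕ, AddSubmonoid.closure (F : Set ℕ) = S := by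
  by_cases hbot : ∀ x ∈ S, x = 0
  · refine ⟨∅, ?_⟩
    simp only [Finset.coe_empty, AddSubmonoid.closure_empty]
    ext x
    simp only [AddSubmonoid.mem_bot]
    exact ⟨fun h => h ▸ S.zero_mem, fun h => hbot x h⟩
  · push_neg at hbot
    obtain ⟨m, hmS, hm0⟩ := hbot
    classical
    let f : ℕ → ℕ := fun r => if h : ∃ x, x ∈ S ∧ x % m = r then Nat.find h else 0
    have hfS : ∀ r, f r ∈ S := by
      intro r
      simp only [f]
      split
      · exact (Nat.find_spec ‹∃ x, x ∈ S ∧ x % m = r›).1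
      · exact S.zero_mem
    refine ⟨insert m ((Finset.range m).image f), ?_⟩
    apply le_antisymm
    · rw [AddSubmonoid.closure_le]
      intro x hx
      simp only [Finset.coe_insert, Set.mem_insert_iff, Finset.coe_image, Set.mem_image,
        Finset.mem_coe, Finset.mem_range] at hx
      rcases hx with rfl | ⟨r, _, rfl⟩
      · exact hmS
      · exact hfS r
    · intro x hxS
      have hFm : m ∈ ((insert m ((Finset.range m).image f) : Finset ℕ) : Set ℕ) := by simp
      have hr : ∃ y, y ∈ S ∧ y % m = x % m := ⟨x, hxS, rfl⟩
      have hc : f (x % m) = Nat.find hr := by simp only [f, dif_pos hr]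
      have hcmod : Nat.find hr % m = x % m := (Nat.find_spec hr).2
      have hcle : Nat.find hr ≤ x := Nat.find_le ⟨hxS, rfl⟩
      have hdvd : m ∣ (x - Nat.find hr) := (Nat.modEq_iff_dvd' hcle).mp hcmod
      obtain ⟨k, hk⟩ := hdvd
      have hx : x = Nat.find hr + m * k := by omega
      have hFc : f (x % m) ∈ ((insert m ((Finset.range m).image f) : Finset ℕ) : Set ℕ) := by
        simp only [Finset.coe_insert, Set.mem_insert_iff, Finset.coe_image, Set.mem_image,
          Finset.mem_coe, Finset.mem_range]
        exact Or.inr ⟨x % m, Nat.mod_lt _ (Nat.pos_of_ne_zero hm0), rfl⟩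
      rw [hx, ← hc]
      exact AddSubmonoid.add_mem _ (AddSubmonoid.subset_closure hFc)
        (by simpa [nsmul_eq_mul, mul_comm] using
          AddSubmonoid.nsmul_mem _ (AddSubmonoid.subset_closure hFm) k)

/-- A submonoid of ℚ consisting of natural multiples of a fixed rational is f.g. -/
lemma fg_of_multiples (M : AddSubmonoid ℚ) (α : ℚ)
    (h : ∀ x ∈ M, ∃ k : ℕ, x = (k : ℚ) * α) : IsFG M := by
  let φ : ℕ →+ ℚ :=
    { toFun := fun k => (k : ℚ) * α
      map_zero' := by simp
      map_add' := by intro a b; push_cast; ring }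
  obtain ⟨F, hF⟩ := natSubmonoid_fg (M.comap φ)
  refine ⟨F.image (fun k : ℕ => (k : ℚ) * α), ?_⟩
  apply le_antisymm
  · rw [AddSubmonoid.closure_le]
    intro x hx
    simp only [Finset.coe_image, Set.mem_image, Finset.mem_coe] at hx
    obtain ⟨k, hkF, rfl⟩ := hx
    have : k ∈ M.comap φ := by rw [← hF]; exact AddSubmonoid.subset_closure hkF
    exact this
  · intro x hx
    obtain ⟨k, rfl⟩ := h x hx
    have hk : k ∈ AddSubmonoid.closure (F : Set ℕ) := hF.symm ▸ hx
    clear hx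
    induction hk using AddSubmonoid.closure_induction with
    | mem y hy => exact AddSubmonoid.subset_closure (by
        simp only [Finset.coe_image, Set.mem_image, Finset.mem_coe]; exact ⟨y, hy, rfl⟩)
    | zero => simp [AddSubmonoid.zero_mem]
    | add a b _ _ ha hb =>
        have heq : ((a + b : ℕ) : ℚ) * α = (a:ℚ)*α + (b:ℚ)*α := by push_cast; ring
        rw [heq]
        exact AddSubmonoid.add_mem _ ha hb

lemma gp_natmul (M : AddSubmonoid ℚ) {x : ℚ} (hx : x ∈ gp M) (k : ℕ) : (k : ℚ) * x ∈ gp M := by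
  obtain ⟨p, hp, r, hr, rfl⟩ := hx
  refine ⟨(k:ℚ) * p, ?_, (k:ℚ) * r, ?_, by ring⟩
  · simpa [nsmul_eq_mul] using M.nsmul_mem hp k
  · simpa [nsmul_eq_mul] using M.nsmul_mem hr k

/-- For a Puiseux monoid, the root closure equals the nonnegative part of the
difference group. -/
lemma rc_eq (M : AddSubmonoid ℚ) (hM : IsPuiseux M) :
    rootClosure M = {q | q ∈ gp M ∧ 0 ≤ q} := by
  ext x
  constructor
  · rintro ⟨hgp, n, hn, hnx⟩
    refine ⟨hgp, ?_⟩
    have h0 : (0:ℚ) ≤ (n:ℚ) * x := hM _ hnx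
    nlinarith [h0, (by exact_mod_cast hn : (0:ℚ) < (n:ℚ))]
  · rintro ⟨hgp, hx0⟩
    refine ⟨hgp, ?_⟩
    obtain ⟨p, hp, r, hr, rfl⟩ := hgp
    rcases eq_or_lt_of_le hx0 with heq | hlt
    · exact ⟨1, one_pos, by rw [← heq, mul_zero]; exact M.zero_mem⟩
    · have hr0 : 0 ≤ r := hM r hr
      have hp0 : 0 ≤ p := le_trans hr0 (by linarith)
      set np : ℕ := p.num.toNat * r.den with hnp
      set nr : ℕ := r.num.toNat * p.den with hnr
      have hpden : ((p.den : ℚ)) ≠ 0 := by exact_mod_cast p.den_nz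
      have hrden : ((r.den : ℚ)) ≠ 0 := by exact_mod_cast r.den_nz
      have hpnum : (p.num : ℚ) = p * p.den := (div_eq_iff hpden).mp (Rat.num_div_den p)
      have hrnum : (r.num : ℚ) = r * r.den := (div_eq_iff hrden).mp (Rat.num_div_den r)
      have hnpq : (np : ℚ) = p * p.den * r.den := by
        rw [hnp]
        have h1 : ((p.num.toNat : ℕ) : ℚ) = (p.num : ℚ) := by
          exact_mod_cast congrArg (fun z : ℤ => (z : ℚ))
            (Int.toNat_of_nonneg (Rat.num_nonneg.mpr hp0))
        push_cast
        rw [h1, hpnum]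
      have hnrq : (nr : ℚ) = r * r.den * p.den := by
        rw [hnr]
        have h1 : ((r.num.toNat : ℕ) : ℚ) = (r.num : ℚ) := by
          exact_mod_cast congrArg (fun z : ℤ => (z : ℚ))
            (Int.toNat_of_nonneg (Rat.num_nonneg.mpr hr0))
        push_cast
        rw [h1, hrnum]
      have hltq : (nr : ℚ) < (np : ℚ) := by
        rw [hnpq, hnrq]
        have hk : (0:ℚ) < (p.den : ℚ) * (r.den : ℚ) := by positivity
        nlinarith
      have hltn : nr < np := by exact_mod_cast hltq
      have hnppos : 0 < np := lt_of_le_of_lt (Nat.zero_le nr) hltn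
      refine ⟨np, hnppos, ?_⟩
      have hkey : (np : ℚ) * (p - r) = ((np - nr : ℕ) : ℚ) * p := by
        rw [Nat.cast_sub hltn.le]
        have : (np : ℚ) * r = (nr : ℚ) * p := by rw [hnpq, hnrq]; ring
        nlinarith [this]
      rw [hkey]
      simpa [nsmul_eq_mul] using M.nsmul_mem hp (np - nr)

/-- If M is f.g., the root closure is contained in (1/d)ℤ and cannot be dense. -/
lemma not_dense_of_fg (M : AddSubmonoid ℚ) (hFG : IsFG M) :
    ¬ DenseInNonneg (coeR (rootClosure M)) := by
  obtain ⟨F, hF⟩ := hFG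
  set d : ℕ := ∏ q ∈ F, q.den with hd
  have hdpos : 0 < d := Finset.prod_pos (fun q _ => q.pos)
  have hMd : ∀ x ∈ M, ∃ z : ℤ, x * d = z := by
    intro x hx
    rw [← hF] at hx
    induction hx using AddSubmonoid.closure_induction with
    | mem q hq =>
        have hqF : q ∈ F := by exact_mod_cast hq
        obtain ⟨e, he⟩ := Finset.dvd_prod_of_mem (fun q : ℚ => q.den) hqF
        refine ⟨q.num * e, ?_⟩
        have hqden : ((q.den : ℚ)) ≠ 0 := by exact_mod_cast q.den_nz
        have hqnum : (q.num : ℚ) = q * q.den := (div_eq_iff hqden).mp (Rat.num_div_den q)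
        rw [← hd] at he
        rw [he]
        push_cast
        rw [hqnum]
        ring
    | zero => exact ⟨0, by simp⟩
    | add a b _ _ ha hb =>
        obtain ⟨za, hza⟩ := ha
        obtain ⟨zb, hzb⟩ := hb
        exact ⟨za + zb, by push_cast; rw [add_mul, hza, hzb]⟩
  have hrc : ∀ x ∈ rootClosure M, ∃ z : ℤ, x * d = z := by
    rintro x ⟨⟨p, hp, r, hr, rfl⟩, -⟩
    obtain ⟨z1, hz1⟩ := hMd p hp
    obtain ⟨z2, hz2⟩ := hMd r hr
    exact ⟨z1 - z2, by push_cast; rw [sub_mul, hz1, hz2]⟩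
  intro hdense
  have hdR : (0:ℝ) < (d:ℝ) := by exact_mod_cast hdpos
  have hc : (1 / (2 * d) : ℝ) ∈ Set.Ici (0:ℝ) := Set.mem_Ici.mpr (by positivity)
  have hmem := hdense hc
  rw [Metric.mem_closure_iff] at hmem
  obtain ⟨b, hb, hdist⟩ := hmem (1/(2*(d:ℝ))) (by positivity)
  obtain ⟨q, hq, rfl⟩ := hb
  obtain ⟨z, hz⟩ := hrc q hq
  have hqR : (q:ℝ) = (z:ℝ) / d := by
    have h2 : ((q * d : ℚ) : ℝ) = ((z : ℚ) : ℝ) := by exact_mod_cast congrArg (fun t : ℚ => (t:ℝ)) hz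
    push_cast at h2
    field_simp
    linarith [h2]
  have hne : ((1:ℤ) - 2*z) ≠ 0 := by omega
  have h1 : (1:ℝ) ≤ |((1 - 2*z : ℤ):ℝ)| := by exact_mod_cast Int.one_le_abs hne
  have hkey : (1:ℝ)/(2*d) ≤ |1/(2*(d:ℝ)) - (z:ℝ)/d| := by
    have heq : 1/(2*(d:ℝ)) - (z:ℝ)/d = ((1 - 2*z : ℤ) : ℝ)/(2*d) := by
      push_cast
      field_simp
    rw [heq, abs_div, abs_of_pos (by positivity : (0:ℝ) < 2*(d:ℝ))]
    gcongr
  have hdist' : |1 / (2 * (d:ℝ)) - (q:ℝ)| < 1/(2*(d:ℝ)) := by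
    simpa [Real.dist_eq] using hdist
  rw [hqR] at hdist'
  linarith [hkey, hdist']

/-- If M is not f.g., the root closure is dense in ℝ≥0. -/
lemma dense_of_not_fg (M : AddSubmonoid ℚ) (hM : IsPuiseux M) (hnf : ¬ IsFG M) :
    DenseInNonneg (coeR (rootClosure M)) := by
  have hsmall : ∀ ε : ℝ, 0 < ε → ∃ q : ℚ, q ∈ rootClosure M ∧ 0 < q ∧ (q:ℝ) < ε := by
    set G : AddSubgroup ℝ := AddSubgroup.closure ((fun q : ℚ => (q:ℝ)) '' (M : Set ℚ)) with hG
    have hGgp : ∀ y ∈ G, ∃ q ∈ gp M, (q:ℝ) = y := by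
      intro y hy
      induction hy using AddSubgroup.closure_induction with
      | mem x hx =>
          obtain ⟨q, hq, rfl⟩ := hx
          exact ⟨q, ⟨q, hq, 0, M.zero_mem, by ring⟩, rfl⟩
      | zero => exact ⟨0, ⟨0, M.zero_mem, 0, M.zero_mem, by ring⟩, by simp⟩
      | add a b _ _ ha hb =>
          obtain ⟨q1, ⟨x1, hx1, y1, hy1, rfl⟩, hq1⟩ := ha
          obtain ⟨q2, ⟨x2, hx2, y2, hy2, rfl⟩, hq2⟩ := hb
          refine ⟨(x1 - y1) + (x2 - y2), ⟨x1 + x2, M.add_mem hx1 hx2,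
            y1 + y2, M.add_mem hy1 hy2, by ring⟩, by push_cast at hq1 hq2 ⊢; rw [hq1, hq2]⟩
      | neg a _ ha =>
          obtain ⟨q1, ⟨x1, hx1, y1, hy1, rfl⟩, hq1⟩ := ha
          exact ⟨y1 - x1, ⟨y1, hy1, x1, hx1, rfl⟩, by push_cast at hq1 ⊢; linarith⟩
    rcases AddSubgroup.dense_or_cyclic G with hdense | ⟨a, ha⟩
    · intro ε hε
      obtain ⟨y, hyG, hyI⟩ := hdense.exists_mem_open isOpen_Ioo
        (⟨ε/2, by constructor <;> linarith⟩ : (Set.Ioo (0:ℝ) ε).Nonempty)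
      obtain ⟨q, hqgp, hqy⟩ := hGgp y hyG
      have hq0 : (0:ℝ) < (q:ℝ) := hqy ▸ hyI.1
      refine ⟨q, ?_, by exact_mod_cast hq0, hqy ▸ hyI.2⟩
      rw [rc_eq M hM]
      exact ⟨hqgp, by exact_mod_cast hq0.le⟩
    · exfalso
      apply hnf
      by_cases h0 : ∀ x ∈ M, x = 0
      · refine ⟨∅, ?_⟩
        simp only [Finset.coe_empty, AddSubmonoid.closure_empty]
        ext x
        simp only [AddSubmonoid.mem_bot]
        exact ⟨fun h => h ▸ M.zero_mem, fun h => h0 x h⟩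
      · push_neg at h0
        obtain ⟨q0, hq0M, hq0⟩ := h0
        have hq0pos : 0 < q0 := lt_of_le_of_ne (hM _ hq0M) (Ne.symm hq0)
        have hmem : (q0:ℝ) ∈ G := AddSubgroup.subset_closure ⟨q0, hq0M, rfl⟩
        rw [ha, AddSubgroup.mem_closure_singleton] at hmem
        obtain ⟨n, hn⟩ := hmem
        have hn0 : n ≠ 0 := by
          rintro rfl
          simp only [zero_zsmul] at hn
          exact hq0 (by exact_mod_cast hn.symm)
        set β : ℚ := q0 / n with hβ
        have haβ : a = (β:ℝ) := by
          have h2 : (n:ℝ) * a = (q0:ℝ) := by rw [← hn]; simp [zsmul_eq_mul]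
          have hnR : ((n:ℝ)) ≠ 0 := by exact_mod_cast hn0
          rw [hβ]
          push_cast
          field_simp
          linarith [h2]
        apply fg_of_multiples M |β|
        intro x hx
        have hmx : (x:ℝ) ∈ G := AddSubgroup.subset_closure ⟨x, hx, rfl⟩
        rw [ha, AddSubgroup.mem_closure_singleton] at hmx
        obtain ⟨m, hm⟩ := hmx
        have hxβ : x = (m:ℚ) * β := by
          have h2 : (m:ℝ) * a = (x:ℝ) := by rw [← hm]; simp [zsmul_eq_mul]
          rw [haβ] at h2
          exact_mod_cast h2.symm
        have hx0 : 0 ≤ x := hM x hx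
        refine ⟨m.natAbs, ?_⟩
        have : ((m.natAbs : ℕ) : ℚ) * |β| = |(m:ℚ) * β| := by
          rw [abs_mul]
          congr 1
          rw [Nat.cast_natAbs]
          push_cast
          rfl
        rw [this, ← hxβ, abs_of_nonneg hx0]
  intro α hα
  rw [Metric.mem_closure_iff]
  intro ε hε
  obtain ⟨q, hqrc, hqpos, hqε⟩ := hsmall ε hε
  have hX : (0:ℝ) < (q:ℝ) := by exact_mod_cast hqpos
  set k : ℕ := ⌈α / (q:ℝ)⌉₊ with hk
  have hαq : 0 ≤ α / (q:ℝ) := div_nonneg hα (le_of_lt hX)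
  have h1 : α ≤ (k:ℝ) * (q:ℝ) := by
    rw [← div_le_iff₀ hX] at *
    exact le_trans (le_refl _) (by rw [hk]; exact_mod_cast Nat.le_ceil _)
  have h2 : (k:ℝ) < α / (q:ℝ) + 1 := by
    rw [hk]; exact Nat.ceil_lt_add_one hαq
  have h3 : (k:ℝ) * (q:ℝ) < α + (q:ℝ) := by
    have := mul_lt_mul_of_pos_right h2 hX
    rw [add_mul, div_mul_cancel₀ _ (ne_of_gt hX), one_mul] at this
    exact this
  refine ⟨(((k:ℚ) * q : ℚ) : ℝ), ⟨(k:ℚ)*q, ?_, rfl⟩, ?_⟩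
  · rw [rc_eq M hM] at hqrc ⊢
    exact ⟨gp_natmul M hqrc.1 k, by positivity⟩
  · rw [Real.dist_eq]
    push_cast
    rw [abs_of_nonpos (by linarith)]
    linarith

/-- The root closure of a Puiseux monoid `M` is dense in ℝ≥0 iff
`M` is not finitely generated. -/
theorem stmt13 (M : AddSubmonoid ℚ) (hM : IsPuiseux M) :
    DenseInNonneg (coeR (rootClosure M)) ↔ ¬ IsFG M := by
  constructor
  · intro hd hFG
    exact not_dense_of_fg M hFG hd
  · intro hnf
    exact dense_of_not_fg M hM hnf
end

section
/- Let M be a Puiseux monoid whose conductor 𝔠(M) = {x ∈ gp(M) | x + M̃ ⊆ M} is nonempty. Then M is nowhere dense in ℝ≥0 if and only if M is finitely generated. -/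
open Set

/-- A Puiseux monoid with bounded denominators is finitely generated. -/
lemma fg_of_bounded_den (M : AddSubmonoid ℚ) (hM : IsPuiseux M) (d : ℕ) (hd : 0 < d)
    (h : ∀ x ∈ M, ∃ z : ℤ, x = (z : ℚ) / d) : IsFG M := by
  set φ : ℕ →+ ℚ := AddMonoidHom.mk' (fun n => (n : ℚ) / d) (by intro a b; push_cast; ring) with hφ
  set N : AddSubmonoid ℕ := M.comap φ with hN
  obtain ⟨F, hF⟩ := natSubmonoid_fg N
  have hmap : N.map φ = M := by
    apply le_antisymm
    · rintro x ⟨n, hn, rfl⟩; exact hn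
    · intro x hx
      obtain ⟨z, hz⟩ := h x hx
      have hx0 : 0 ≤ x := hM x hx
      have hdQ : (0:ℚ) < (d:ℚ) := by exact_mod_cast hd
      have hz0 : 0 ≤ z := by
        by_contra hzneg
        push_neg at hzneg
        have hzz : ((z:ℚ)) < 0 := by exact_mod_cast hzneg
        have : (z:ℚ)/d < 0 := div_neg_of_neg_of_pos hzz hdQ
        rw [← hz] at this; linarith
      have hco : φ z.toNat = x := by
        show ((z.toNat : ℕ) : ℚ) / d = x
        rw [hz]
        congr 1
        exact_mod_cast Int.toNat_of_nonneg hz0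
      exact ⟨z.toNat, by show φ z.toNat ∈ M; rw [hco]; exact hx, hco⟩
  refine ⟨F.image (fun n : ℕ => (n : ℚ) / d), ?_⟩
  have himg : ((F.image (fun n : ℕ => (n : ℚ) / d) : Finset ℚ) : Set ℚ) = ⇑φ '' (F : Set ℕ) := by
    rw [Finset.coe_image]
    rfl
  rw [himg, ← AddMonoidHom.map_mclosure, hF, hmap]

/-- The difference group of `M`, as an `AddSubgroup` of ℚ. -/
def gpGroup (M : AddSubmonoid ℚ) : AddSubgroup ℚ where
  carrier := gp M
  zero_mem' := ⟨0, zero_mem M, 0, zero_mem M, by ring⟩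
  add_mem' := by
    rintro x y ⟨a, ha, b, hb, rfl⟩ ⟨u, hu, v, hv, rfl⟩
    exact ⟨a + u, add_mem ha hu, b + v, add_mem hb hv, by ring⟩
  neg_mem' := by
    rintro x ⟨a, ha, b, hb, rfl⟩
    exact ⟨b, hb, a, ha, by ring⟩

/-- Every nonnegative element of the difference group lies in the root closure. -/
lemma mem_rootClosure_of_nonneg (M : AddSubmonoid ℚ) (hM : IsPuiseux M) {x : ℚ}
    (hx : x ∈ gp M) (hx0 : 0 ≤ x) : x ∈ rootClosure M := by
  refine ⟨hx, ?_⟩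
  obtain ⟨a, ha, b, hb, rfl⟩ := hx
  rcases eq_or_lt_of_le hx0 with heq | hlt
  · exact ⟨1, one_pos, by rw [← heq, mul_zero]; exact zero_mem M⟩
  · by_cases hb0 : b = 0
    · subst hb0
      exact ⟨1, one_pos, by simpa using ha⟩
    · have hbpos : 0 < b := lt_of_le_of_ne (hM b hb) (Ne.symm hb0)
      have hba : b < a := by linarith
      set q : ℚ := a / b with hq
      have hq1 : 1 < q := (one_lt_div hbpos).mpr hba
      have hqb : q * b = a := div_mul_cancel₀ a (ne_of_gt hbpos)
      have hden : (0:ℚ) < (q.den : ℚ) := by exact_mod_cast q.den_pos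
      have hnum : (q.num : ℚ) = q * q.den := (div_eq_iff (ne_of_gt hden)).mp (Rat.num_div_den q)
      have huv : (q.den : ℚ) < (q.num : ℚ) := by
        calc (q.den : ℚ) = 1 * q.den := (one_mul _).symm
        _ < q * q.den := by exact mul_lt_mul_of_pos_right hq1 hden
        _ = (q.num : ℚ) := hnum.symm
      have huvZ : (q.den : ℤ) < q.num := by exact_mod_cast huv
      set k : ℕ := (q.num - (q.den : ℤ)).toNat with hkdef
      have hkZ : ((k : ℕ) : ℤ) = q.num - (q.den : ℤ) := Int.toNat_of_nonneg (by omega)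
      have hk : ((k : ℕ) : ℚ) = (q.num : ℚ) - (q.den : ℚ) := by
        have := congrArg (fun z : ℤ => (z : ℚ)) hkZ
        push_cast at this
        exact this
      refine ⟨q.den, q.den_pos, ?_⟩
      have key : ((q.den : ℕ) : ℚ) * (a - b) = (k : ℚ) * b := by
        rw [hk, hnum, ← hqb]
        ring
      rw [key, ← nsmul_eq_mul]
      exact nsmul_mem hb k

/-- A finitely generated Puiseux monoid is nowhere dense in ℝ≥0. -/
lemma nowhereDense_of_fg (M : AddSubmonoid ℚ) (hfg : IsFG M) :
    NowhereDenseNonneg (coeR (M : Set ℚ)) := by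
  obtain ⟨F, hF⟩ := hfg
  set d : ℕ := ∏ f ∈ F, f.den with hd
  have hdpos : 0 < d := Finset.prod_pos (fun f _ => f.den_pos)
  have hdQ : ((d:ℚ)) ≠ 0 := by positivity
  set D : AddSubmonoid ℚ :=
    { carrier := {x : ℚ | ∃ z : ℤ, x = (z : ℚ) / d}
      zero_mem' := ⟨0, by simp⟩
      add_mem' := by
        rintro x y ⟨z1, rfl⟩ ⟨z2, rfl⟩
        exact ⟨z1 + z2, by push_cast; ring⟩ } with hD
  have hMD : M ≤ D := by
    rw [← hF, AddSubmonoid.closure_le]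
    intro f hf
    have hdvd : f.den ∣ d := Finset.dvd_prod_of_mem _ hf
    obtain ⟨m, hm⟩ := hdvd
    have hfden : ((f.den : ℚ)) ≠ 0 := by exact_mod_cast f.den_ne_zero
    have hnum : (f.num : ℚ) = f * f.den :=
      (div_eq_iff hfden).mp (Rat.num_div_den f)
    refine ⟨f.num * m, ?_⟩
    rw [eq_div_iff hdQ]
    have : ((d:ℚ)) = (f.den : ℚ) * (m : ℚ) := by exact_mod_cast hm
    rw [this]
    push_cast
    rw [hnum]
    ring
  intro r s hr hrs hsub
  obtain ⟨t, hirr, htr, hts⟩ := exists_irrational_btwn hrs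
  have ht : t ∈ closure (coeR (M : Set ℚ) ∩ Set.Ioo r s) := hsub ⟨htr, hts⟩
  have hdR : (0:ℝ) < (d:ℝ) := by exact_mod_cast hdpos
  have hne : ∀ z : ℤ, t ≠ (z : ℝ) / d := by
    intro z hz
    exact hirr ⟨(z : ℚ) / d, by rw [hz]; push_cast; ring⟩
  set k : ℤ := ⌊t * d⌋ with hk
  have hklt : (k : ℝ) < t * d := by
    rcases lt_or_eq_of_le (Int.floor_le (t * d)) with h1 | h1
    · exact h1
    · exact absurd ((eq_div_iff (ne_of_gt hdR)).mpr h1.symm) (hne k)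
  have hltk1 : t * d < (k : ℝ) + 1 := Int.lt_floor_add_one (t * d)
  rw [mem_closure_iff] at ht
  obtain ⟨y, hy1, hy2, hy3⟩ :=
    ht (Set.Ioo ((k : ℝ) / d) (((k : ℝ) + 1) / d)) isOpen_Ioo
      ⟨(div_lt_iff₀ hdR).mpr hklt, (lt_div_iff₀ hdR).mpr hltk1⟩
  obtain ⟨qy, hqy, rfl⟩ := hy2
  obtain ⟨z, hz⟩ := hMD hqy
  have hyz : ((qy : ℝ)) = (z : ℝ) / d := by rw [hz]; push_cast; ring
  simp only [Set.mem_Ioo] at hy1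
  rw [hyz] at hy1
  have h1 : (k : ℝ) < (z : ℝ) := by
    have := hy1.1
    rw [div_lt_div_iff₀ hdR hdR] at this
    exact lt_of_mul_lt_mul_right this hdR.le
  have h2 : (z : ℝ) < (k : ℝ) + 1 := by
    have := hy1.2
    rw [div_lt_div_iff₀ hdR hdR] at this
    exact lt_of_mul_lt_mul_right this hdR.le
  have h1' : k < z := by exact_mod_cast h1
  have h2' : z < k + 1 := by exact_mod_cast h2
  omega

/-- A Puiseux monoid with nonempty conductor that is nowhere dense in ℝ≥0 is
finitely generated. -/
lemma fg_of_nowhereDense (M : AddSubmonoid ℚ) (hM : IsPuiseux M)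
    (hc : (conductorSet M).Nonempty)
    (hnd : NowhereDenseNonneg (coeR (M : Set ℚ))) : IsFG M := by
  obtain ⟨c, hcgp, hcy⟩ := hc
  rcases AddSubgroup.dense_or_cyclic (gpGroup M) with hdense | ⟨a, hcyc⟩
  · exfalso
    have h0root : (0:ℚ) ∈ rootClosure M :=
      ⟨⟨0, zero_mem M, 0, zero_mem M, by ring⟩, 1, one_pos, by simpa using zero_mem M⟩
    have hcM : c ∈ M := by simpa using hcy 0 h0root
    have hc0 : (0:ℚ) ≤ c := hM c hcM
    have hc0R : (0:ℝ) ≤ ((c:ℚ) : ℝ) := by exact_mod_cast hc0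
    apply hnd ((c:ℚ) : ℝ) (((c:ℚ) : ℝ) + 1) hc0R (lt_add_one _)
    have hdR : Dense ((fun q : ℚ => (q : ℝ)) '' ((gpGroup M : AddSubgroup ℚ) : Set ℚ)) :=
      (Rat.isDenseEmbedding_coe_real.dense_image).mpr hdense
    have hdR2 : Dense ((fun x : ℝ => ((c:ℚ) : ℝ) + x) ''
        ((fun q : ℚ => (q : ℝ)) '' ((gpGroup M : AddSubgroup ℚ) : Set ℚ))) := by
      have := (Homeomorph.addLeft ((c:ℚ) : ℝ)).isDenseEmbedding.dense_image.mpr hdR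
      exact this
    have hsub := hdR2.open_subset_closure_inter (isOpen_Ioo (a := ((c:ℚ):ℝ)) (b := ((c:ℚ):ℝ) + 1))
    intro x hx
    refine closure_mono ?_ (hsub hx)
    rintro y ⟨hyIoo, w, ⟨g, hg, rfl⟩, rfl⟩
    have hyIoo' := hyIoo
    simp only [Set.mem_Ioo] at hyIoo'
    refine ⟨?_, hyIoo⟩
    have hgpos : (0:ℝ) < ((g:ℚ) : ℝ) := by linarith [hyIoo'.1]
    have hg0 : (0:ℚ) ≤ g := by exact_mod_cast hgpos.le
    have hcgM : c + g ∈ M := hcy g (mem_rootClosure_of_nonneg M hM hg hg0)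
    exact ⟨c + g, hcgM, by push_cast; ring⟩
  · have hdenne : ((a.den : ℚ)) ≠ 0 := by exact_mod_cast a.den_ne_zero
    have hnum : (a.num : ℚ) = a * a.den := (div_eq_iff hdenne).mp (Rat.num_div_den a)
    apply fg_of_bounded_den M hM a.den a.den_pos
    intro x hx
    have hxgp : x ∈ gpGroup M := ⟨x, hx, 0, zero_mem M, by ring⟩
    rw [hcyc, AddSubgroup.mem_closure_singleton] at hxgp
    obtain ⟨n, hn⟩ := hxgp
    refine ⟨n * a.num, ?_⟩
    rw [← hn, zsmul_eq_mul, eq_div_iff hdenne]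
    push_cast
    rw [hnum]
    ring

/-- A Puiseux monoid with nonempty conductorSet is nowhere dense in
ℝ≥0 iff it is finitely generated. -/
theorem stmt15 (M : AddSubmonoid ℚ) (hM : IsPuiseux M)
    (hc : (conductorSet M).Nonempty) :
    NowhereDenseNonneg (coeR (M : Set ℚ)) ↔ IsFG M := by
  exact ⟨fg_of_nowhereDense M hM hc, nowhereDense_of_fg M⟩
end

section
/- Let M be an increasing Puiseux monoid. Then no real number is a limit point of M from the right. -/
open Set

open Pointwise

/-- no right limit points -/
def NRt (S : Set ℝ) : Prop := ∀ α : ℝ, ¬ RightLimitPt α S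

lemma not_rlp_iff {α : ℝ} {S : Set ℝ} :
    ¬ RightLimitPt α S ↔ ∃ ε : ℝ, 0 < ε ∧ ∀ z ∈ S, α < z → α + ε ≤ z := by
  unfold RightLimitPt
  push_neg
  constructor
  · rintro ⟨ε, hε, h⟩
    refine ⟨ε, hε, fun z hz hc => ?_⟩
    by_contra hcon
    push_neg at hcon
    have : z ∈ Set.Ioo α (α + ε) ∩ S := ⟨⟨hc, hcon⟩, hz⟩
    rw [h] at this
    exact this
  · rintro ⟨ε, hε, h⟩
    refine ⟨ε, hε, ?_⟩
    rw [Set.eq_empty_iff_forall_notMem]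
    rintro z ⟨⟨h1, h2⟩, hz⟩
    exact absurd h2 (not_lt.mpr (h z hz h1))

lemma NRt_empty : NRt (∅ : Set ℝ) := by
  intro α h
  rcases h 1 one_pos with ⟨z, _, hz⟩
  exact hz

lemma NRt_insert {S : Set ℝ} (x : ℝ) (h : NRt S) : NRt (insert x S) := by
  intro α hα
  rcases not_rlp_iff.mp (h α) with ⟨ε, hε, hS⟩
  by_cases hx : α < x
  · have hε' : 0 < min ε (x - α) := lt_min hε (by linarith)
    rcases hα _ hε' with ⟨z, ⟨hz1, hz2⟩, hz3⟩
    have hm1 : min ε (x - α) ≤ ε := min_le_left _ _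
    have hm2 : min ε (x - α) ≤ x - α := min_le_right _ _
    rcases hz3 with rfl | hz3
    · linarith
    · have := hS z hz3 hz1; linarith
  · rcases hα ε hε with ⟨z, ⟨hz1, hz2⟩, hz3⟩
    rcases hz3 with rfl | hz3
    · exact hx hz1
    · have := hS z hz3 hz1; linarith

/-- The range of a monotone sequence (cast to ℝ) has no right limit points. -/
lemma NRt_range (a : ℕ → ℚ) (ha : Monotone a) :
    NRt ((fun q : ℚ => (q : ℝ)) '' Set.range a) := by
  classical
  intro α hα
  have hP : ∃ n : ℕ, α < (a n : ℝ) ∧ (a n : ℝ) < α + 1 := by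
    rcases hα 1 one_pos with ⟨z, ⟨h1, h2⟩, q, ⟨n, rfl⟩, rfl⟩
    exact ⟨n, h1, h2⟩
  set n₀ := Nat.find hP with hn₀
  obtain ⟨h1, h2⟩ := Nat.find_spec hP
  have hε : (0:ℝ) < (a n₀ : ℝ) - α := by linarith
  rcases hα _ hε with ⟨z, ⟨hz1, hz2⟩, q, ⟨m, rfl⟩, rfl⟩
  have hm2 : (a m : ℝ) < (a n₀ : ℝ) := by linarith
  have hm3 : (a m : ℝ) < α + 1 := by linarith
  have : n₀ ≤ m := Nat.find_min' hP ⟨hz1, hm3⟩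
  have : (a n₀ : ℝ) ≤ (a m : ℝ) := by exact_mod_cast ha this
  linarith

/-- Minkowski sums of nonneg sets with no right limit points have none. -/
lemma NRt_add {A B : Set ℝ} (hA0 : A ⊆ Set.Ici 0) (hB0 : B ⊆ Set.Ici 0)
    (hA : NRt A) (hB : NRt B) : NRt (A + B) := by
  intro α hα
  have hx : ∀ n : ℕ, ∃ x : ℝ, x ∈ Set.Ioo α (α + 1 / ((n:ℝ) + 1)) ∧ x ∈ A + B := by
    intro n
    rcases hα (1 / ((n:ℝ) + 1)) (by positivity) with ⟨x, hx1, hx2⟩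
    exact ⟨x, hx1, hx2⟩
  choose x hx1 hx2 using hx
  choose u hu v hv huv using fun n => Set.mem_add.mp (hx2 n)
  have hxlt : ∀ n, x n < α + 1 := by
    intro n
    have := (hx1 n).2
    have h1 : 1 / ((n:ℝ) + 1) ≤ 1 := by
      rw [div_le_one (by positivity)]; simp [Nat.cast_nonneg]
    linarith
  have hubd : ∀ n, u n ∈ Set.Icc (0:ℝ) (α + 1) := by
    intro n
    refine ⟨hA0 (hu n), ?_⟩
    have h0v : 0 ≤ v n := hB0 (hv n)
    have := huv n; have := hxlt n; linarith
  obtain ⟨ul, _, φ, hφ, hut⟩ := (isCompact_Icc (a := (0:ℝ)) (b := α + 1)).tendsto_subseq hubd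
  -- x tends to α
  have hxt : Filter.Tendsto x Filter.atTop (nhds α) := by
    have hup : Filter.Tendsto (fun n : ℕ => α + 1 / ((n:ℝ) + 1)) Filter.atTop (nhds α) := by
      have : Filter.Tendsto (fun n : ℕ => 1 / ((n:ℝ) + 1)) Filter.atTop (nhds 0) :=
        tendsto_one_div_add_atTop_nhds_zero_nat
      simpa using Filter.Tendsto.add (tendsto_const_nhds (x := α)) this
    exact tendsto_of_tendsto_of_tendsto_of_le_of_le tendsto_const_nhds hup
      (fun n => le_of_lt (hx1 n).1) (fun n => le_of_lt (hx1 n).2)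
  have hxφ : Filter.Tendsto (fun n => x (φ n)) Filter.atTop (nhds α) :=
    hxt.comp hφ.tendsto_atTop
  have hvt : Filter.Tendsto (fun n => v (φ n)) Filter.atTop (nhds (α - ul)) := by
    have : (fun n => v (φ n)) = fun n => x (φ n) - u (φ n) := by
      funext n; have := huv (φ n); linarith
    rw [this]
    exact hxφ.sub hut
  rcases not_rlp_iff.mp (hA ul) with ⟨ε₁, hε₁, hAe⟩
  rcases not_rlp_iff.mp (hB (α - ul)) with ⟨ε₂, hε₂, hBe⟩
  have e1 : ∀ᶠ n in Filter.atTop, u (φ n) < ul + ε₁ :=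
    hut.eventually (eventually_lt_nhds (by linarith))
  have e2 : ∀ᶠ n in Filter.atTop, v (φ n) < (α - ul) + ε₂ :=
    hvt.eventually (eventually_lt_nhds (by linarith))
  rcases (e1.and e2).exists with ⟨n, hn1, hn2⟩
  have hu' : u (φ n) ≤ ul := by
    by_contra hc
    have := hAe _ (hu (φ n)) (lt_of_not_ge hc); linarith
  have hv' : v (φ n) ≤ α - ul := by
    by_contra hc
    have := hBe _ (hv (φ n)) (lt_of_not_ge hc); linarith
  have : x (φ n) ≤ α := by have := huv (φ n); linarith
  exact absurd (hx1 (φ n)).1 (not_lt.mpr this)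

/-- sums of at most k elements -/
def sumSet (A : Set ℝ) : ℕ → Set ℝ
  | 0 => {0}
  | (k+1) => sumSet A k + A

lemma sumSet_nonneg {A : Set ℝ} (hA : A ⊆ Set.Ici 0) : ∀ k, sumSet A k ⊆ Set.Ici 0 := by
  intro k
  induction k with
  | zero => rintro x rfl; simp
  | succ k ih =>
    rintro x hx
    rcases Set.mem_add.mp hx with ⟨y, hy, z, hz, rfl⟩
    exact Set.mem_Ici.mpr (add_nonneg (Set.mem_Ici.mp (ih hy)) (Set.mem_Ici.mp (hA hz)))

lemma NRt_sumSet {A : Set ℝ} (hA0 : A ⊆ Set.Ici 0) (hA : NRt A) : ∀ k, NRt (sumSet A k) := by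
  intro k
  induction k with
  | zero =>
    have : ({0} : Set ℝ) = insert 0 ∅ := by simp
    rw [sumSet, this]
    exact NRt_insert 0 NRt_empty
  | succ k ih => exact NRt_add (sumSet_nonneg hA0 k) hA0 ih hA

lemma zero_mem_sumSet {A : Set ℝ} (h0 : (0:ℝ) ∈ A) : ∀ k, (0:ℝ) ∈ sumSet A k := by
  intro k
  induction k with
  | zero => exact Set.mem_singleton _
  | succ k ih => exact Set.mem_add.mpr ⟨0, ih, 0, h0, by simp⟩

lemma sum_mem_sumSet (a : ℕ → ℚ) :
    ∀ (k : ℕ) (m : Multiset ℚ), m.card ≤ k → (∀ y ∈ m, y ∈ Set.range a) →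
      ((m.sum : ℚ) : ℝ) ∈ sumSet (insert (0:ℝ) ((fun q : ℚ => (q:ℝ)) '' Set.range a)) k := by
  intro k
  induction k with
  | zero =>
    intro m hcard _
    have : m = 0 := Multiset.card_eq_zero.mp (Nat.le_zero.mp hcard)
    subst this
    simp [sumSet]
  | succ k ih =>
    intro m hcard hmem
    rcases Multiset.empty_or_exists_mem m with rfl | ⟨y, hy⟩
    · have h0 : (0:ℝ) ∈ insert (0:ℝ) ((fun q : ℚ => (q:ℝ)) '' Set.range a) :=
        Set.mem_insert _ _
      simpa using zero_mem_sumSet h0 (k+1)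
    · rcases Multiset.exists_cons_of_mem hy with ⟨t, rfl⟩
      have hcard' : t.card ≤ k := by
        have := hcard; rw [Multiset.card_cons] at this; omega
      have hmem' : ∀ z ∈ t, z ∈ Set.range a := fun z hz =>
        hmem z (Multiset.mem_cons_of_mem hz)
      have hsum : ((y ::ₘ t).sum : ℚ) = t.sum + y := by
        rw [Multiset.sum_cons]; ring
      rw [hsum, Rat.cast_add]
      exact Set.add_mem_add (ih t hcard' hmem')
        (Set.mem_insert_of_mem _ ⟨y, hmem y (Multiset.mem_cons_self _ _), rfl⟩)

/-- An increasing Puiseux monoid has no limit point from the right. -/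
theorem stmt17 (M : AddSubmonoid ℚ) (hM : IsIncreasing M) :
    ∀ α : ℝ, ¬ RightLimitPt α (coeR (M : Set ℚ)) := by
  classical
  unfold coeR
  obtain ⟨a, hmono, hnn, hclos⟩ := hM
  intro α hα
  set A := insert (0:ℝ) ((fun q : ℚ => (q:ℝ)) '' Set.range a) with hA
  have hA0 : A ⊆ Set.Ici 0 := by
    rintro x (rfl | ⟨q, ⟨n, rfl⟩, rfl⟩)
    · exact Set.mem_Ici.mpr (le_refl 0)
    · refine Set.mem_Ici.mpr ?_
      show (0:ℝ) ≤ ((a n : ℚ) : ℝ)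
      exact_mod_cast hnn n
  have hNA : NRt A := NRt_insert 0 (NRt_range a hmono)
  -- multiset representation of elements of M
  have hrep : ∀ x ∈ M, ∃ m : Multiset ℚ, (∀ y ∈ m, y ∈ Set.range a) ∧ m.sum = x := by
    intro x hx
    rw [← hclos] at hx
    induction hx using AddSubmonoid.closure_induction with
    | mem z hz => exact ⟨{z}, by simpa using hz, by simp⟩
    | zero => exact ⟨0, by simp, rfl⟩
    | add z w _ _ hz hw =>
      obtain ⟨m1, hm1, hs1⟩ := hz
      obtain ⟨m2, hm2, hs2⟩ := hw
      refine ⟨m1 + m2, ?_, by rw [Multiset.sum_add, hs1, hs2]⟩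
      intro y hy
      rcases Multiset.mem_add.mp hy with h | h
      · exact hm1 y h
      · exact hm2 y h
  set B : ℝ := max α 0 + 1 with hB
  by_cases hall : ∀ n, a n = 0
  · -- M = {0}
    have hsub : ∀ x ∈ M, x = 0 := by
      intro x hx
      obtain ⟨m, hm, hs⟩ := hrep x hx
      rw [← hs]
      refine Multiset.sum_eq_zero ?_
      intro y hy
      obtain ⟨n, rfl⟩ := hm y hy
      exact hall n
    have : RightLimitPt α ({0} : Set ℝ) := by
      intro ε hε
      rcases hα ε hε with ⟨z, hz1, q, hq, rfl⟩
      exact ⟨(q:ℝ), hz1, by rw [hsub q hq]; norm_num⟩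
    have h0 : NRt ({0} : Set ℝ) := by
      have : ({0} : Set ℝ) = insert 0 ∅ := by simp
      rw [this]; exact NRt_insert 0 NRt_empty
    exact h0 α this
  · push_neg at hall
    set n₀ := Nat.find hall with hn₀
    have hc0 : 0 < a n₀ := lt_of_le_of_ne (hnn n₀) (Ne.symm (Nat.find_spec hall))
    have hcmin : ∀ m : ℕ, a m ≠ 0 → a n₀ ≤ a m := by
      intro m hm
      exact hmono (Nat.find_min' hall hm)
    set k : ℕ := ⌈B / ((a n₀ : ℚ) : ℝ)⌉₊ with hk
    have hkey : ∀ x ∈ M, (x : ℝ) < B → ((x:ℚ):ℝ) ∈ sumSet A k := by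
      intro x hx hxB
      obtain ⟨m, hm, hs⟩ := hrep x hx
      set m' := m.filter (· ≠ (0:ℚ)) with hm'
      have hsum' : m'.sum = x := by
        rw [← hs]
        have hsplit : m = m.filter (· ≠ (0:ℚ)) + m.filter (¬ · ≠ (0:ℚ)) :=
          (Multiset.filter_add_not _ m).symm
        conv_rhs => rw [hsplit]
        rw [Multiset.sum_add]
        have : (m.filter (¬ · ≠ (0:ℚ))).sum = 0 := by
          refine Multiset.sum_eq_zero ?_
          intro y hy
          have := Multiset.of_mem_filter hy
          simpa using this
        rw [this, add_zero]
      have hmem' : ∀ y ∈ m', y ∈ Set.range a := fun y hy =>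
        hm y (Multiset.mem_of_mem_filter hy)
      -- card bound
      have hge : ∀ y ∈ m', a n₀ ≤ y := by
        intro y hy
        obtain ⟨n, rfl⟩ := hmem' y hy
        rw [hm'] at hy
        have hyne := Multiset.of_mem_filter hy
        exact hcmin n hyne
      have hcard : m'.card • a n₀ ≤ m'.sum := Multiset.card_nsmul_le_sum hge
      have hcardR : (m'.card : ℝ) * ((a n₀ : ℚ) : ℝ) ≤ (x : ℝ) := by
        rw [← hsum']
        have := hcard
        rw [nsmul_eq_mul] at this
        exact_mod_cast this
      have hcardle : (m'.card : ℝ) ≤ B / ((a n₀ : ℚ) : ℝ) := by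
        rw [le_div_iff₀ (by exact_mod_cast hc0)]
        linarith
      have hck : m'.card ≤ k := by
        have := Nat.ceil_le_ceil hcardle
        rwa [Nat.ceil_natCast] at this
      rw [← hsum']
      exact sum_mem_sumSet a k m' hck hmem'
    -- conclude
    have hrlp : RightLimitPt α (sumSet A k) := by
      intro ε hε
      have hε' : 0 < min ε 1 := lt_min hε one_pos
      rcases hα _ hε' with ⟨z, ⟨hz1, hz2⟩, q, hq, rfl⟩
      have hzB : ((q:ℚ):ℝ) < B := by
        have h1 : min ε 1 ≤ 1 := min_le_right _ _
        have h2 : α ≤ max α 0 := le_max_left _ _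
        rw [hB]; linarith
      refine ⟨(q:ℝ), ⟨hz1, ?_⟩, hkey q hq hzB⟩
      have := min_le_left ε 1
      linarith
    exact NRt_sumSet hA0 hNA k α hrlp
end

section
/- Every increasing Puiseux monoid M is nowhere dense in ℝ≥0. -/
open Set

-- closure of the range of a monotone real sequence is countable
lemma mono_closure_countable (f : ℕ → ℝ) (hf : Monotone f) :
    (closure (Set.range f)).Countable := by
  have h : closure (Set.range f) ⊆ Set.range f ∪ {sSup (Set.range f)} := by
    intro x hx
    by_cases hxr : x ∈ Set.range f
    · exact Or.inl hxr
    right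
    have hub : ∀ n, f n ≤ x := by
      intro N
      by_contra hlt
      push_neg at hlt
      set δ : ℝ := (Finset.range (N+1)).inf' (by simp) (fun m => |f m - x|) with hδ
      have hδpos : 0 < δ := by
        rw [Finset.lt_inf'_iff]
        intro m hm
        have : f m ≠ x := fun h => hxr ⟨m, h⟩
        exact abs_pos.mpr (sub_ne_zero.mpr this)
      have hfar : ∀ n, δ ≤ |f n - x| := by
        intro n
        by_cases hn : n ≤ N
        · exact Finset.inf'_le _ (Finset.mem_range.mpr (Nat.lt_succ_of_le hn))
        · push_neg at hn
          have h1 : f N ≤ f n := hf hn.le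
          have h2 : δ ≤ |f N - x| := Finset.inf'_le _ (by simp)
          have h3 : |f N - x| = f N - x := abs_of_pos (by linarith)
          have h4 : |f n - x| = f n - x := abs_of_pos (by linarith)
          linarith [h2, h3 ▸ h2]
      rw [Metric.mem_closure_iff] at hx
      obtain ⟨y, ⟨n, rfl⟩, hy⟩ := hx δ hδpos
      have := hfar n
      rw [Real.dist_eq, abs_sub_comm] at hy
      linarith
    have hbdd : BddAbove (Set.range f) := ⟨x, by rintro y ⟨n, rfl⟩; exact hub n⟩
    have h1 : sSup (Set.range f) ≤ x := csSup_le ⟨f 0, ⟨0, rfl⟩⟩ (by rintro y ⟨n, rfl⟩; exact hub n)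
    have h2 : x ≤ sSup (Set.range f) := by
      have : closure (Set.range f) ⊆ Set.Iic (sSup (Set.range f)) := by
        rw [show Set.Iic (sSup (Set.range f)) = closure (Set.Iic (sSup (Set.range f))) from (isClosed_Iic.closure_eq).symm]
        exact closure_mono (by rintro y ⟨n, rfl⟩; exact le_csSup hbdd ⟨n, rfl⟩)
      exact this hx
    exact le_antisymm h2 h1 |>.symm ▸ rfl
  exact ((Set.countable_range f).union (Set.countable_singleton _)).mono h


-- F-chain: sums of at most k elements of C
private def Fch (C : Set ℝ) : ℕ → Set ℝ
  | 0 => {0}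
  | k+1 => Fch C k ∪ Set.image2 (· + ·) C (Fch C k)

lemma Fch_mono (C : Set ℝ) : Monotone (Fch C) := by
  apply monotone_nat_of_le_succ
  intro k
  exact Set.subset_union_left

lemma Fch_add (C : Set ℝ) : ∀ j k : ℕ, ∀ x ∈ Fch C j, ∀ y ∈ Fch C k, x + y ∈ Fch C (j + k) := by
  intro j
  induction j with
  | zero =>
    intro k x hx y hy
    simp only [Fch, Set.mem_singleton_iff] at hx
    subst hx
    simpa using Fch_mono C (Nat.le_add_left k 0) hy
  | succ j ih =>
    intro k x hx y hy
    have hidx : j + 1 + k = (j + k) + 1 := by omega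
    rw [hidx]
    simp only [Fch, Set.mem_union, Set.mem_image2] at hx ⊢
    rcases hx with hx | ⟨c, hc, x', hx', rfl⟩
    · exact Or.inl (ih k x hx y hy)
    · exact Or.inr ⟨c, hc, x' + y, ih k x' hx' y hy, by ring⟩

lemma Fch_countable {C : Set ℝ} (hC : C.Countable) (k : ℕ) : (Fch C k).Countable := by
  induction k with
  | zero => exact Set.countable_singleton 0
  | succ k ih => exact ih.union (hC.image2 ih _)

lemma Fch_compact {C : Set ℝ} (hC : IsCompact C) (k : ℕ) :
    IsCompact (Fch C k) := by
  induction k with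
  | zero => exact isCompact_singleton
  | succ k ih =>
    exact ih.union (hC.add ih)

/-- Every increasing Puiseux monoid is nowhere dense in ℝ≥0. -/
theorem stmt18 (M : AddSubmonoid ℚ) (hM : IsIncreasing M) :
    NowhereDenseNonneg (coeR (M : Set ℚ)) := by
  obtain ⟨a, hmono, hnn, hcl⟩ := hM
  intro r s hr hrs hdense
  by_cases hzero : ∀ n, a n = 0
  -- trivial case: M = {0}
  · have hM0 : ∀ x ∈ M, x = (0 : ℚ) := by
      intro x hx
      rw [← hcl] at hx
      refine AddSubmonoid.closure_induction (fun y hy => ?_) rfl (fun u v _ _ hu hv => by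
        rw [hu, hv, add_zero]) hx
      obtain ⟨n, rfl⟩ := hy
      exact hzero n
    have hempty : coeR (M : Set ℚ) ∩ Set.Ioo r s = ∅ := by
      ext x
      simp only [Set.mem_inter_iff, Set.mem_empty_iff_false, iff_false, not_and]
      rintro ⟨q, hq, rfl⟩ hx
      rw [hM0 q hq] at hx
      simp only [Rat.cast_zero] at hx
      exact absurd hx.1 (not_lt.mpr hr)
    rw [hempty, closure_empty] at hdense
    exact (Set.nonempty_Ioo.mpr hrs).ne_empty (Set.subset_empty_iff.mp hdense)
  -- main case
  push_neg at hzero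
  have hex : ∃ n, 0 < a n := by
    obtain ⟨n, hn⟩ := hzero
    exact ⟨n, lt_of_le_of_ne (hnn n) (Ne.symm hn)⟩
  set N := Nat.find hex with hN
  have hq : 0 < a N := Nat.find_spec hex
  set qq : ℝ := (a N : ℝ) with hqq
  have hqR : 0 < qq := by rw [hqq]; exact_mod_cast hq
  set f : ℕ → ℝ := fun n => (a n : ℝ) with hf
  have hfmono : Monotone f := fun i j hij => by simp only [hf]; exact_mod_cast hmono hij
  set C : Set ℝ := closure (Set.range f) ∩ Set.Icc qq s with hC
  -- key claim
  have key : ∀ x ∈ M, 0 ≤ x ∧ ((x : ℝ) ≤ s → ∃ k : ℕ, (k : ℝ) * qq ≤ (x : ℝ) ∧ (x : ℝ) ∈ Fch C k) := by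
    intro x hx
    rw [← hcl] at hx
    refine AddSubmonoid.closure_induction (fun y hy => ?_) ?_ ?_ hx
    · -- generator
      obtain ⟨n, rfl⟩ := hy
      refine ⟨hnn n, fun hle => ?_⟩
      by_cases h0 : a n = 0
      · exact ⟨0, by simp [h0], by simp [h0, Fch]⟩
      · have hpos : 0 < a n := lt_of_le_of_ne (hnn n) (Ne.symm h0)
        have hnN : N ≤ n := by
          by_contra hc
          push_neg at hc
          exact absurd hpos (Nat.find_min hex hc)
        have h1 : qq ≤ (a n : ℝ) := by rw [hqq]; exact_mod_cast hmono hnN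
        refine ⟨1, by simpa using h1, ?_⟩
        have hmem : (a n : ℝ) ∈ C :=
          ⟨subset_closure ⟨n, rfl⟩, h1, hle⟩
        have : (a n : ℝ) = (a n : ℝ) + 0 := by ring
        rw [this]
        exact Or.inr ⟨(a n : ℝ), hmem, 0, rfl, rfl⟩
    · -- zero
      exact ⟨le_refl 0, fun _ => ⟨0, by simp, by simp [Fch]⟩⟩
    · -- add
      rintro u v _ _ ⟨hu0, hu⟩ ⟨hv0, hv⟩
      refine ⟨by positivity, fun hle => ?_⟩
      have huR : (0:ℝ) ≤ (u:ℝ) := by exact_mod_cast hu0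
      have hvR : (0:ℝ) ≤ (v:ℝ) := by exact_mod_cast hv0
      have hsum : (u:ℝ) + (v:ℝ) ≤ s := by push_cast at hle ⊢; linarith
      obtain ⟨j, hj1, hj2⟩ := hu (by linarith)
      obtain ⟨k, hk1, hk2⟩ := hv (by linarith)
      refine ⟨j + k, ?_, ?_⟩
      · push_cast; nlinarith
      · push_cast
        exact Fch_add C j k _ hj2 _ hk2
  -- conclude
  set K : ℕ := ⌈s / qq⌉₊ with hK
  have hsub : coeR (M : Set ℚ) ∩ Set.Ioo r s ⊆ Fch C K := by
    rintro x ⟨⟨y, hy, rfl⟩, hx1, hx2⟩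
    obtain ⟨_, h⟩ := key y hy
    obtain ⟨k, hk1, hk2⟩ := h hx2.le
    have hkK : k ≤ K := by
      have h1 : (k : ℝ) ≤ s / qq := by
        rw [le_div_iff₀ hqR]
        linarith [hx2.le]
      calc k = ⌈(k:ℝ)⌉₊ := by simp
        _ ≤ K := Nat.ceil_le_ceil h1
    exact Fch_mono C hkK hk2
  have hCcompact : IsCompact C := by
    refine isCompact_Icc.of_isClosed_subset ?_ Set.inter_subset_right
    exact isClosed_closure.inter isClosed_Icc
  have hCcount : C.Countable := (mono_closure_countable f hfmono).mono Set.inter_subset_left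
  have hclosed : IsClosed (Fch C K) := (Fch_compact hCcompact K).isClosed
  have hIoo : Set.Ioo r s ⊆ Fch C K := by
    intro x hx
    have := hdense hx
    exact hclosed.closure_subset_iff.mpr hsub this
  have hcnt : (Set.Ioo r s).Countable := (Fch_countable hCcount K).mono hIoo
  have := hcnt.measure_zero (MeasureTheory.volume)
  rw [Real.volume_Ioo] at this
  have : s - r ≤ 0 := by
    by_contra hc
    push_neg at hc
    exact (ENNReal.ofReal_pos.mpr hc).ne' this
  linarith
end

section
/- Let M be an increasing Puiseux monoid. Then the conductor 𝔠(M) = {x ∈ gp(M) | x + M̃ ⊆ M} is nonempty if and only if M is finitely generated. -/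
open Set Pointwise

lemma mem_gp_of_mem {M : AddSubmonoid ℚ} {m : ℚ} (hm : m ∈ M) : m ∈ gp M :=
  ⟨m, hm, 0, M.zero_mem, by ring⟩

lemma gp_add {M : AddSubmonoid ℚ} {z w : ℚ} (hz : z ∈ gp M) (hw : w ∈ gp M) :
    z + w ∈ gp M := by
  obtain ⟨x, hx, y, hy, rfl⟩ := hz
  obtain ⟨u, hu, v, hv, rfl⟩ := hw
  exact ⟨x + u, M.add_mem hx hu, y + v, M.add_mem hy hv, by ring⟩

lemma gp_int_smul {M : AddSubmonoid ℚ} {z : ℚ} (hz : z ∈ gp M) (k : ℤ) :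
    (k : ℚ) * z ∈ gp M := by
  obtain ⟨x, hx, y, hy, rfl⟩ := hz
  rcases le_or_gt 0 k with hk | hk
  · refine ⟨k.toNat • x, M.nsmul_mem hx _, k.toNat • y, M.nsmul_mem hy _, ?_⟩
    rw [nsmul_eq_mul, nsmul_eq_mul]
    have : ((k.toNat : ℤ) : ℚ) = (k : ℚ) := by rw [Int.toNat_of_nonneg hk]
    push_cast at this
    rw [this]; ring
  · refine ⟨(-k).toNat • y, M.nsmul_mem hy _, (-k).toNat • x, M.nsmul_mem hx _, ?_⟩
    rw [nsmul_eq_mul, nsmul_eq_mul]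
    have : (((-k).toNat : ℤ) : ℚ) = ((-k : ℤ) : ℚ) := by rw [Int.toNat_of_nonneg (by omega)]
    push_cast at this
    rw [this]; ring

lemma nonneg_of_closure {a : ℕ → ℚ} (ha : ∀ n, 0 ≤ a n) {m : ℚ}
    (hm : m ∈ AddSubmonoid.closure (Set.range a)) : 0 ≤ m := by
  induction hm using AddSubmonoid.closure_induction with
  | mem x hx => obtain ⟨n, rfl⟩ := hx; exact ha n
  | zero => norm_num
  | add x y _ _ hx hy => positivity

lemma mem_rootClosure_of_nonneg_s19 {M : AddSubmonoid ℚ} {m₀ z : ℚ} (hm₀ : m₀ ∈ M)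
    (hpos : 0 < m₀) (hz : z ∈ gp M) (hznn : 0 ≤ z) : z ∈ rootClosure M := by
  refine ⟨hz, (z / m₀).den, (z / m₀).pos, ?_⟩
  have h1 : ((z / m₀).den : ℚ) * z = ((z / m₀).num : ℚ) * m₀ := by
    have := Rat.mul_den_eq_num (z / m₀)
    field_simp at this ⊢
    nlinarith [this]
  rw [h1]
  have hnum : 0 ≤ (z / m₀).num := Rat.num_nonneg.2 (div_nonneg hznn hpos.le)
  have : ((z / m₀).num.toNat : ℚ) = ((z / m₀).num : ℚ) := by
    exact_mod_cast congrArg (Int.cast : ℤ → ℚ) (Int.toNat_of_nonneg hnum)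
  rw [← this, ← nsmul_eq_mul]
  exact M.nsmul_mem hm₀ _

lemma zero_mem_rootClosure (M : AddSubmonoid ℚ) : (0:ℚ) ∈ rootClosure M :=
  ⟨mem_gp_of_mem M.zero_mem, 1, one_pos, by simpa using M.zero_mem⟩

lemma cover (b : ℕ) {k : ℕ} (hk : b*b ≤ k) : ∃ s t : ℕ, k = s*b + t*(b+1) := by
  rcases Nat.eq_zero_or_pos b with rfl | hb
  · exact ⟨0, k, by ring⟩
  · refine ⟨k / b - k % b, k % b, ?_⟩
    have hr : k % b < b := Nat.mod_lt _ hb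
    have hw : b ≤ k / b := (Nat.le_div_iff_mul_le hb).2 hk
    have hrw : k % b ≤ k / b := le_trans hr.le hw
    have h2 : (k / b - k % b) * b + (k % b) * (b+1) = (k/b) * b + k % b := by
      rw [Nat.sub_mul]; have : k % b * b ≤ k / b * b := Nat.mul_le_mul_right _ hrw
      rw [Nat.mul_add]; omega
    rw [h2]
    exact (Nat.div_add_mod' k b).symm

lemma fg_of_conductor_bound {M : AddSubmonoid ℚ}
    {c m₀ : ℚ} (hc : c ∈ conductorSet M) (hm₀ : m₀ ∈ M) (hm₀pos : 0 < m₀)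
    {q : ℕ} (hq : 0 < q) (hrep : ∀ m ∈ M, ∃ n : ℕ, m = n / q) : IsFG M := by
  have hqQ : (0:ℚ) < q := by exact_mod_cast hq
  have hcM : c ∈ M := by simpa using hc.2 0 (zero_mem_rootClosure M)
  obtain ⟨X, hX⟩ := hrep c hcM
  obtain ⟨n₀, hn₀⟩ := hrep m₀ hm₀
  have hn₀pos : 0 < n₀ := by
    rcases Nat.eq_zero_or_pos n₀ with rfl | h
    · simp at hn₀; rw [hn₀] at hm₀pos; norm_num at hm₀pos
    · exact h
  set T : ℕ := 2*X + n₀ with hT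
  set Fset : Set ℚ := {m | m ∈ M ∧ m ≤ (T : ℚ)/q} with hFset
  have hfin : Fset.Finite := by
    apply Set.Finite.subset ((Set.finite_Iic T).image (fun n : ℕ => (n:ℚ)/q))
    rintro m ⟨hmM, hmle⟩
    obtain ⟨n, rfl⟩ := hrep m hmM
    refine ⟨n, ?_, rfl⟩
    simp only [Set.mem_Iic]
    have := (div_le_div_iff_of_pos_right hqQ).1 hmle
    exact_mod_cast this
  have key : ∀ n : ℕ, ((n:ℚ)/q ∈ M) → (n:ℚ)/q ∈ AddSubmonoid.closure Fset := by
    intro n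
    induction n using Nat.strong_induction_on with
    | _ n ih =>
      intro hn
      by_cases hle : n ≤ T
      · exact AddSubmonoid.subset_closure
          ⟨hn, (div_le_div_iff_of_pos_right hqQ).2 (by exact_mod_cast hle)⟩
      · push_neg at hle
        have hp₁ : ((X + n₀ : ℕ):ℚ)/q ∈ Fset := by
          constructor
          · have : ((X + n₀ : ℕ):ℚ)/q = c + m₀ := by push_cast; rw [hX, hn₀]; ring
            rw [this]; exact M.add_mem hcM hm₀
          · exact (div_le_div_iff_of_pos_right hqQ).2 (by exact_mod_cast (by omega : X + n₀ ≤ T))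
        set n₂ := n - (X + n₀) with hn₂def
        have hn₂lt : n₂ < n := by omega
        have hcast : (n:ℚ) = ((X + n₀ : ℕ):ℚ) + (n₂:ℚ) := by
          rw [hn₂def]; push_cast [Nat.cast_sub (by omega : X + n₀ ≤ n)]; ring
        have hn₂M : (n₂:ℚ)/q ∈ M := by
          set w : ℚ := (n:ℚ)/q - (c + (c + m₀)) with hw
          have hwgp : w ∈ gp M := ⟨(n:ℚ)/q, hn, c + (c + m₀),
            M.add_mem hcM (M.add_mem hcM hm₀), rfl⟩
          have hwnn : 0 ≤ w := by
            rw [hw, hX, hn₀]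
            rw [sub_nonneg, ← add_div, ← add_div, div_le_div_iff_of_pos_right hqQ]
            push_cast
            have : (T:ℚ) ≤ (n:ℚ) := by exact_mod_cast hle.le
            push_cast [hT] at this
            linarith
          have := hc.2 w (mem_rootClosure_of_nonneg_s19 hm₀ hm₀pos hwgp hwnn)
          have heq : c + w = (n₂:ℚ)/q := by
            rw [hw, hX, hn₀, hcast]; push_cast; ring
          rwa [heq] at this
        have h2 := ih n₂ hn₂lt hn₂M
        have : (n:ℚ)/q = ((X + n₀:ℕ):ℚ)/q + (n₂:ℚ)/q := by
          rw [hcast]; ring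
        rw [this]
        exact AddSubmonoid.add_mem _ (AddSubmonoid.subset_closure hp₁) h2
  refine ⟨hfin.toFinset, ?_⟩
  rw [Set.Finite.coe_toFinset]
  apply le_antisymm
  · rw [AddSubmonoid.closure_le]; exact fun m hm => hm.1
  · intro m hm
    obtain ⟨n, rfl⟩ := hrep m hm
    exact key n hm

lemma conductor_of_fg {M : AddSubmonoid ℚ} (hnn : ∀ m ∈ M, 0 ≤ m) (hfg : IsFG M) :
    (conductorSet M).Nonempty := by
  by_cases hpos : ∃ m ∈ M, 0 < m
  swap
  · -- M = {0}
    push_neg at hpos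
    have hzero : ∀ m ∈ M, m = 0 := fun m hm => le_antisymm (hpos m hm) (hnn m hm)
    refine ⟨0, mem_gp_of_mem M.zero_mem, fun y hy => ?_⟩
    obtain ⟨⟨x, hx, y', hy', rfl⟩, -⟩ := hy
    rw [hzero x hx, hzero y' hy']
    simpa using M.zero_mem
  obtain ⟨m₀, hm₀, hm₀pos⟩ := hpos
  obtain ⟨F, hF⟩ := hfg
  set q : ℕ := ∏ f ∈ F, f.den with hqdef
  have hq : 0 < q := Finset.prod_pos (fun f _ => f.pos)
  have hqQ : (0:ℚ) < q := by exact_mod_cast hq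
  have hrep : ∀ m ∈ M, ∃ n : ℕ, m = (n:ℚ) / q := by
    intro m hm
    rw [← hF] at hm
    induction hm using AddSubmonoid.closure_induction with
    | mem f hf =>
      have hfM : f ∈ M := hF ▸ AddSubmonoid.subset_closure hf
      have hfnn : 0 ≤ f := hnn f hfM
      have hdvd : f.den ∣ q := Finset.dvd_prod_of_mem (fun f => f.den) hf
      refine ⟨f.num.toNat * (q / f.den), ?_⟩
      have h1 : ((q / f.den) * f.den : ℕ) = q := Nat.div_mul_cancel hdvd
      have h2 : (q:ℚ) = ((q/f.den : ℕ):ℚ) * (f.den:ℚ) := by exact_mod_cast h1.symm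
      rw [eq_div_iff (ne_of_gt hqQ), h2,
        show f * (((q/f.den:ℕ):ℚ) * (f.den:ℚ)) = (f * f.den) * ((q/f.den:ℕ):ℚ) by ring,
        Rat.mul_den_eq_num]
      push_cast
      have h3 : ((f.num.toNat:ℕ):ℚ) = ((f.num:ℤ):ℚ) := by
        exact_mod_cast congrArg (Int.cast : ℤ → ℚ) (Int.toNat_of_nonneg (Rat.num_nonneg.2 hfnn))
      rw [h3]
    | zero => exact ⟨0, by norm_num⟩
    | add x y hx hy ihx ihy =>
      obtain ⟨n1, rfl⟩ := ihx
      obtain ⟨n2, rfl⟩ := ihy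
      exact ⟨n1 + n2, by push_cast; ring⟩
  set Iset : Set ℤ := {z : ℤ | (z:ℚ)/q ∈ M} with hIdef
  have hI0 : (0:ℤ) ∈ Iset := by simpa [hIdef] using M.zero_mem
  have hIadd : ∀ z ∈ Iset, ∀ w ∈ Iset, z + w ∈ Iset := by
    intro z hz w hw
    show ((z + w : ℤ):ℚ)/q ∈ M
    have heq : ((z + w : ℤ):ℚ)/q = (z:ℚ)/q + (w:ℚ)/q := by push_cast; ring
    rw [heq]; exact M.add_mem hz hw
  have hInn : ∀ z ∈ Iset, 0 ≤ z := by
    intro z hz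
    have := hnn _ hz
    have h2 : (0:ℚ) ≤ (z:ℚ) := by
      by_contra h
      push_neg at h
      have : (z:ℚ)/q < 0 := div_neg_of_neg_of_pos h hqQ
      linarith
    exact_mod_cast h2
  have hInsmul : ∀ (s : ℕ), ∀ z ∈ Iset, (s:ℤ) * z ∈ Iset := by
    intro s z hz
    have : ((s:ℤ) * z : ℤ) • ((1:ℚ)/q) = (s:ℕ) • ((z:ℚ)/q) := by
      push_cast [zsmul_eq_mul, nsmul_eq_mul]; ring
    have h2 := M.nsmul_mem hz s
    show (((s:ℤ) * z : ℤ):ℚ)/q ∈ M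
    have h3 : (((s:ℤ) * z : ℤ):ℚ)/q = s • ((z:ℚ)/q) := by
      push_cast [nsmul_eq_mul]; ring
    rw [h3]; exact h2
  set H : AddSubgroup ℤ := AddSubgroup.closure Iset with hHdef
  obtain ⟨g₀, hg₀⟩ := Int.subgroup_cyclic H
  set g : ℕ := g₀.natAbs with hgdef
  have hdvd : ∀ z ∈ Iset, (g:ℤ) ∣ z := by
    intro z hz
    have hzH : z ∈ H := AddSubgroup.subset_closure hz
    rw [hg₀, ← AddSubgroup.zmultiples_eq_closure, Int.mem_zmultiples_iff] at hzH
    exact (Int.natAbs_dvd).2 hzH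
  -- difference representation
  have hdiff : ∃ A B : ℤ, A ∈ Iset ∧ B ∈ Iset ∧ A - B = (g:ℤ) := by
    set D : AddSubgroup ℤ :=
      { carrier := {z : ℤ | ∃ a ∈ Iset, ∃ b ∈ Iset, z = a - b}
        zero_mem' := ⟨0, hI0, 0, hI0, by ring⟩
        add_mem' := by
          rintro z w ⟨a, ha, b, hb, rfl⟩ ⟨a', ha', b', hb', rfl⟩
          exact ⟨a + a', hIadd a ha a' ha', b + b', hIadd b hb b' hb', by ring⟩
        neg_mem' := by
          rintro z ⟨a, ha, b, hb, rfl⟩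
          exact ⟨b, hb, a, ha, by ring⟩ } with hDdef
    have hHD : H ≤ D := by
      rw [hHdef, AddSubgroup.closure_le]
      intro z hz
      exact ⟨z, hz, 0, hI0, by ring⟩
    have hg₀H : g₀ ∈ H := by
      rw [hg₀]; exact AddSubgroup.subset_closure rfl
    obtain ⟨A, hA, B, hB, hAB⟩ := hHD hg₀H
    rcases le_or_gt 0 g₀ with h | h
    · have hgg : ((g:ℕ):ℤ) = g₀ := by rw [hgdef]; exact Int.natAbs_of_nonneg h
      exact ⟨A, B, hA, hB, by omega⟩
    · have hgg : ((g:ℕ):ℤ) = -g₀ := by rw [hgdef]; exact Int.ofNat_natAbs_of_nonpos h.le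
      exact ⟨B, A, hB, hA, by omega⟩
  obtain ⟨A, B, hA, hB, hAB⟩ := hdiff
  have hgpos : 0 < g := by
    obtain ⟨n, hn⟩ := hrep m₀ hm₀
    have hnne : n ≠ 0 := by
      rintro rfl
      simp at hn
      rw [hn] at hm₀pos; norm_num at hm₀pos
    have hnI : (n:ℤ) ∈ Iset := by show ((n:ℤ):ℚ)/q ∈ M; push_cast; rw [← hn]; exact hm₀
    have := hdvd _ hnI
    rcases Nat.eq_zero_or_pos g with hg0 | h
    · rw [hg0] at this; simp at this; exact absurd (by exact_mod_cast this) hnne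
    · exact h
  have hAnn := hInn A hA
  have hBnn := hInn B hB
  -- b₁
  have hgB : (g:ℤ) ∣ B := hdvd B hB
  obtain ⟨b₁', hb₁⟩ := hgB
  have hgZ : (0:ℤ) < (g:ℤ) := by exact_mod_cast hgpos
  have hb₁nn : 0 ≤ b₁' := by
    by_contra h
    push_neg at h
    have : (g:ℤ) * b₁' < 0 := mul_neg_of_pos_of_neg hgZ h
    omega
  set b₁ : ℕ := b₁'.toNat with hb₁def
  have hb₁cast : (b₁ : ℤ) = b₁' := Int.toNat_of_nonneg hb₁nn
  have hBval : B = (g:ℤ) * (b₁:ℤ) := by rw [hb₁cast]; exact hb₁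
  have hAval : A = (g:ℤ) * ((b₁:ℤ) + 1) := by rw [mul_add, ← hBval, mul_one]; omega
  -- key covering
  have key : ∀ k : ℕ, b₁*b₁ ≤ k → ((g*k : ℕ):ℤ) ∈ Iset := by
    intro k hk
    obtain ⟨s, t, hst⟩ := cover b₁ hk
    have : ((g*k : ℕ):ℤ) = (s:ℤ) * B + (t:ℤ) * A := by
      rw [hBval, hAval, hst]; push_cast; ring
    rw [this]
    exact hIadd _ (hInsmul s B hB) _ (hInsmul t A hA)
  set x : ℚ := ((g*(b₁*b₁) : ℕ):ℚ)/q with hxdef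
  have hxM : x ∈ M := key (b₁*b₁) le_rfl
  refine ⟨x, mem_gp_of_mem hxM, ?_⟩
  rintro y ⟨⟨m₁, h₁, m₂, h₂, rfl⟩, n, hn, hnM⟩
  have hynn : 0 ≤ m₁ - m₂ := by
    have h0 := hnn _ hnM
    have hnQ : (0:ℚ) < (n:ℚ) := by exact_mod_cast hn
    nlinarith
  obtain ⟨n₁, hn₁⟩ := hrep m₁ h₁
  obtain ⟨n₂, hn₂⟩ := hrep m₂ h₂
  have hn₁I : ((n₁:ℤ)) ∈ Iset := by show (((n₁:ℤ)):ℚ)/q ∈ M; push_cast; rw [← hn₁]; exact h₁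
  have hn₂I : ((n₂:ℤ)) ∈ Iset := by show (((n₂:ℤ)):ℚ)/q ∈ M; push_cast; rw [← hn₂]; exact h₂
  have hle : n₂ ≤ n₁ := by
    have : (n₂:ℚ)/q ≤ (n₁:ℚ)/q := by rw [← hn₁, ← hn₂]; linarith
    have := (div_le_div_iff_of_pos_right hqQ).1 this
    exact_mod_cast this
  have hdvd₁ : g ∣ n₁ := by
    have := hdvd _ hn₁I; exact_mod_cast this
  have hdvd₂ : g ∣ n₂ := by
    have := hdvd _ hn₂I; exact_mod_cast this
  have hdvdsub : g ∣ (n₁ - n₂) := Nat.dvd_sub hdvd₁ hdvd₂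
  obtain ⟨j, hj⟩ := hdvdsub
  have hmem := key (b₁*b₁ + j) (Nat.le_add_right _ _)
  have hgj : ((g*j:ℕ):ℚ) = (n₁:ℚ) - n₂ := by rw [← hj, Nat.cast_sub hle]
  have hcast2 : ((g*(b₁*b₁+j):ℕ):ℚ) = ((g*(b₁*b₁):ℕ):ℚ) + ((g*j:ℕ):ℚ) := by push_cast; ring
  have hfin : x + (m₁ - m₂) = ((g*(b₁*b₁+j) : ℕ):ℚ)/q := by
    rw [hxdef, hn₁, hn₂, hcast2, hgj]; ring
  rw [hfin]
  exact hmem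

-- (a) Case with a gap: denominators are bounded.
lemma bound_of_gap {M : AddSubmonoid ℚ} (hnn : ∀ m ∈ M, 0 ≤ m)
    {m₀ : ℚ} (hm₀ : m₀ ∈ M) (hm₀pos : 0 < m₀) {δ : ℚ} (hδ : 0 < δ)
    (hgap : ∀ g ∈ gp M, 0 < g → δ ≤ g) :
    ∃ q : ℕ, 0 < q ∧ ∀ m ∈ M, ∃ n : ℕ, m = (n:ℚ) / q := by
  set L : ℕ := ⌈m₀/δ⌉₊ with hLdef
  refine ⟨L.factorial * m₀.den, Nat.mul_pos L.factorial_pos m₀.pos, ?_⟩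
  intro m hm
  set e : ℕ := m.den * m₀.den with hedef
  have hepos : (0:ℚ) < e := by exact_mod_cast Nat.mul_pos m.pos m₀.pos
  set A : ℤ := m.num * (m₀.den : ℤ) with hAdef
  set Bz : ℤ := m₀.num * (m.den : ℤ) with hBdef
  have hAe : (A:ℚ) = m * e := by
    push_cast [hAdef, hedef]
    rw [show m * ((m.den:ℚ) * (m₀.den:ℚ)) = (m * m.den) * m₀.den by ring, Rat.mul_den_eq_num]
  have hBe : (Bz:ℚ) = m₀ * e := by
    push_cast [hBdef, hedef]
    rw [show m₀ * ((m.den:ℚ) * (m₀.den:ℚ)) = (m₀ * m₀.den) * m.den by ring, Rat.mul_den_eq_num]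
  have hBpos : 0 < Bz := mul_pos (Rat.num_pos.2 hm₀pos) (by exact_mod_cast m.pos)
  set t : ℕ := Int.gcd A Bz with htdef
  have htpos : 0 < t := Int.gcd_pos_of_ne_zero_right A hBpos.ne'
  set d : ℚ := (t:ℚ)/e with hddef
  have hdpos : 0 < d := div_pos (by exact_mod_cast htpos) hepos
  have hdgp : d ∈ gp M := by
    have hcomb : d = (Int.gcdA A Bz : ℚ) * m + (Int.gcdB A Bz : ℚ) * m₀ := by
      have := Int.gcd_eq_gcd_ab A Bz
      have h2 : (t:ℚ) = (A:ℚ) * (Int.gcdA A Bz : ℚ) + (Bz:ℚ) * (Int.gcdB A Bz : ℚ) := by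
        exact_mod_cast congrArg (Int.cast : ℤ → ℚ) this
      rw [hddef, h2, hAe, hBe]
      field_simp
    rw [hcomb]
    exact gp_add (gp_int_smul (mem_gp_of_mem hm) _) (gp_int_smul (mem_gp_of_mem hm₀) _)
  have hdδ : δ ≤ d := hgap d hdgp hdpos
  obtain ⟨l, hl⟩ : (t:ℤ) ∣ Bz := Int.gcd_dvd_right A Bz
  obtain ⟨k, hk⟩ : (t:ℤ) ∣ A := Int.gcd_dvd_left A Bz
  have he2 : m₀ = (l:ℚ) * d := by
    have hlQ : (Bz:ℚ) = (t:ℚ) * (l:ℚ) := by exact_mod_cast congrArg (Int.cast : ℤ → ℚ) hl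
    have h1 : m₀ * e = (l:ℚ) * (t:ℚ) := by rw [← hBe, hlQ]; ring
    rw [hddef, ← mul_div_assoc, eq_div_iff hepos.ne']
    exact h1
  have he1 : m = (k:ℚ) * d := by
    have hkQ : (A:ℚ) = (t:ℚ) * (k:ℚ) := by exact_mod_cast congrArg (Int.cast : ℤ → ℚ) hk
    have h1 : m * e = (k:ℚ) * (t:ℚ) := by rw [← hAe, hkQ]; ring
    rw [hddef, ← mul_div_assoc, eq_div_iff hepos.ne']
    exact h1
  have hlpos : 0 < l := by
    by_contra h
    push_neg at h
    have : (l:ℚ) ≤ 0 := by exact_mod_cast h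
    nlinarith
  have hknn : 0 ≤ k := by
    by_contra h
    push_neg at h
    have hkQ : (k:ℚ) < 0 := by exact_mod_cast h
    have := hnn m hm
    nlinarith
  set l' : ℕ := l.toNat with hl'def
  have hl'cast : (l':ℚ) = (l:ℚ) := by exact_mod_cast congrArg (Int.cast : ℤ → ℚ) (Int.toNat_of_nonneg hlpos.le)
  have hl'pos : 0 < l' := by
    have : (0:ℤ) < l'  := by rw [Int.toNat_of_nonneg hlpos.le] at *; exact hlpos
    exact_mod_cast this
  have hl'L : l' ≤ L := by
    have h1 : (l':ℚ) * δ ≤ m₀ := by rw [hl'cast, he2]; nlinarith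
    have h2 : (l':ℚ) ≤ m₀/δ := by rw [le_div_iff₀ hδ]; exact h1
    have h3 : (m₀/δ : ℚ) ≤ (L:ℚ) := Nat.le_ceil _
    exact_mod_cast h2.trans h3
  have hfact : l' ∣ L.factorial := Nat.dvd_factorial hl'pos hl'L
  set w : ℕ := L.factorial / l' with hwdef
  have e5 : (L.factorial:ℚ) = (w:ℚ) * (l:ℚ) := by
    rw [← hl'cast]
    exact_mod_cast (Nat.div_mul_cancel hfact).symm
  have hm₀num : (m₀.num:ℚ) = m₀ * m₀.den := (Rat.mul_den_eq_num m₀).symm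
  set z : ℤ := k * (w:ℤ) * m₀.num with hzdef
  have hznn : 0 ≤ z := by
    apply mul_nonneg (mul_nonneg hknn (by positivity)) (Rat.num_pos.2 hm₀pos).le
  have hclaim : ((L.factorial * m₀.den : ℕ):ℚ) * m = (z:ℚ) := by
    push_cast [hzdef]
    rw [he1, hm₀num, he2, e5]
    ring
  refine ⟨z.toNat, ?_⟩
  have hzcast : ((z.toNat:ℕ):ℚ) = (z:ℚ) := by exact_mod_cast congrArg (Int.cast : ℤ → ℚ) (Int.toNat_of_nonneg hznn)
  rw [eq_div_iff (by positivity : ((L.factorial * m₀.den : ℕ):ℚ) ≠ 0)]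
  rw [hzcast, ← hclaim]
  ring

-- closure of range of a monotone real sequence
lemma closure_range_mono_subset {b : ℕ → ℝ} (hb : Monotone b) :
    closure (Set.range b) ⊆ Set.range b ∪ {sSup (Set.range b)} := by
  intro x hx
  by_cases hcase : ∃ n₁, x < b n₁
  · obtain ⟨n₁, hn₁⟩ := hcase
    left
    have hsub : Set.range b ⊆ (b '' Set.Iio n₁) ∪ Set.Ici (b n₁) := by
      rintro _ ⟨k, rfl⟩
      rcases lt_or_ge (b k) (b n₁) with h | h
      · left
        refine ⟨k, ?_, rfl⟩
        by_contra hk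
        have : n₁ ≤ k := not_lt.1 (by simpa using hk)
        exact absurd (hb this) (not_le.2 h)
      · right; exact h
    have hclosed : IsClosed ((b '' Set.Iio n₁) ∪ Set.Ici (b n₁)) :=
      (((Set.finite_Iio n₁).image b).isClosed).union isClosed_Ici
    rcases (closure_minimal hsub hclosed) hx with h | h
    · obtain ⟨k, -, rfl⟩ := h
      exact ⟨k, rfl⟩
    · exact absurd h (not_le.2 hn₁)
  · push_neg at hcase
    right
    have hbdd : BddAbove (Set.range b) := ⟨x, by rintro _ ⟨n, rfl⟩; exact hcase n⟩
    have hle : sSup (Set.range b) ≤ x :=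
      csSup_le (Set.range_nonempty b) (by rintro _ ⟨n, rfl⟩; exact hcase n)
    have hge : x ≤ sSup (Set.range b) :=
      (closure_minimal (fun y hy => le_csSup hbdd hy : Set.range b ⊆ Set.Iic _) isClosed_Iic) hx
    exact Set.mem_singleton_iff.2 (le_antisymm hge hle)

-- iterated sumsets
def Tset (S : Set ℝ) : ℕ → Set ℝ
  | 0 => {0}
  | (k+1) => S + Tset S k

lemma Tset_isCompact {S : Set ℝ} (hS : IsCompact S) : ∀ k, IsCompact (Tset S k)
  | 0 => isCompact_singleton
  | (k+1) => hS.add (Tset_isCompact hS k)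

lemma Tset_countable {S : Set ℝ} (hS : S.Countable) : ∀ k, (Tset S k).Countable
  | 0 => Set.countable_singleton 0
  | (k+1) => by
      have := hS.image2 (Tset_countable hS k) (· + ·)
      simpa [Set.image2_add, Tset] using this

lemma zero_mem_Tset {S : Set ℝ} (h0 : (0:ℝ) ∈ S) : ∀ k, (0:ℝ) ∈ Tset S k
  | 0 => rfl
  | (k+1) => by
      have := Set.add_mem_add h0 (zero_mem_Tset h0 k)
      simpa [Tset] using this

lemma multiset_sum_mem_Tset {S : Set ℝ} (h0 : (0:ℝ) ∈ S) :
    ∀ (k : ℕ) (l : Multiset ℝ), (∀ x ∈ l, x ∈ S) → Multiset.card l ≤ k →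
      l.sum ∈ Tset S k := by
  intro k
  induction k with
  | zero =>
    intro l hl hc
    have : l = 0 := Multiset.card_eq_zero.1 (Nat.le_zero.1 hc)
    subst this
    simp [Tset]
  | succ k ih =>
    intro l hl hc
    by_cases h : l = 0
    · subst h
      simpa using zero_mem_Tset h0 (k+1)
    · obtain ⟨x, hx⟩ := Multiset.exists_mem_of_ne_zero h
      have hl' := Multiset.cons_erase hx
      rw [← hl', Multiset.sum_cons]
      have hcard : Multiset.card (l.erase x) ≤ k := by
        rw [Multiset.card_erase_of_mem hx, Nat.pred_eq_sub_one]
        have := Multiset.card_pos.2 (show l ≠ 0 from h)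
        omega
      exact Set.add_mem_add (hl x hx)
        (ih _ (fun y hy => hl y (Multiset.mem_of_mem_erase hy)) hcard)

lemma exists_multiset {a : ℕ → ℚ} (ha : ∀ n, 0 ≤ a n) {m : ℚ}
    (hm : m ∈ AddSubmonoid.closure (Set.range a)) :
    ∃ l : Multiset ℚ, (∀ x ∈ l, x ∈ Set.range a ∧ 0 < x) ∧ l.sum = m := by
  induction hm using AddSubmonoid.closure_induction with
  | mem x hx =>
    obtain ⟨n, rfl⟩ := hx
    rcases eq_or_lt_of_le (ha n) with h | h
    · exact ⟨0, by simp, by simp [← h]⟩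
    · refine ⟨{a n}, ?_, by simp⟩
      intro y hy
      rw [Multiset.mem_singleton] at hy
      subst hy
      exact ⟨⟨n, rfl⟩, h⟩
  | zero => exact ⟨0, by simp, by simp⟩
  | add x y hx hy ihx ihy =>
    obtain ⟨l₁, h₁, rfl⟩ := ihx
    obtain ⟨l₂, h₂, rfl⟩ := ihy
    exact ⟨l₁ + l₂, by
      intro z hz
      rcases Multiset.mem_add.1 hz with h | h
      exacts [h₁ z h, h₂ z h], by simp⟩

lemma bound_of_conductor {M : AddSubmonoid ℚ} {a : ℕ → ℚ} (hmono : Monotone a)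
    (hann : ∀ n, 0 ≤ a n) (hcl : AddSubmonoid.closure (Set.range a) = M)
    {c : ℚ} (hcond : ∀ y ∈ rootClosure M, c + y ∈ M)
    {m₀ : ℚ} (hm₀ : m₀ ∈ M) (hm₀pos : 0 < m₀) :
    ∃ q : ℕ, 0 < q ∧ ∀ m ∈ M, ∃ n : ℕ, m = (n:ℚ)/q := by
  classical
  have hnn : ∀ m ∈ M, 0 ≤ m := by
    intro m hm; rw [← hcl] at hm; exact nonneg_of_closure hann hm
  by_cases hgapcase : ∃ δ : ℚ, 0 < δ ∧ ∀ g ∈ gp M, 0 < g → δ ≤ g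
  · obtain ⟨δ, hδ, hgap⟩ := hgapcase
    exact bound_of_gap hnn hm₀ hm₀pos hδ hgap
  exfalso
  push_neg at hgapcase
  have hsmall : ∀ δ : ℚ, 0 < δ → ∃ g ∈ gp M, 0 < g ∧ g < δ := by
    intro δ hδ
    obtain ⟨g, hg1, hg2, hg3⟩ := hgapcase δ hδ
    exact ⟨g, hg1, hg2, hg3⟩
  have hcM : c ∈ M := by simpa using hcond 0 (zero_mem_rootClosure M)
  have hcnn : 0 ≤ c := hnn c hcM
  -- density of M in (c, ∞)
  have dens : ∀ u v : ℚ, c ≤ u → u < v → ∃ m ∈ M, u < m ∧ m < v := by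
    intro u v hu huv
    obtain ⟨g, hggp, hgpos, hglt⟩ := hsmall (v - u) (by linarith)
    set k : ℤ := ⌊(u - c)/g⌋ + 1 with hkdef
    have hfl : (0:ℤ) ≤ ⌊(u - c)/g⌋ := Int.floor_nonneg.2 (div_nonneg (by linarith) hgpos.le)
    have hk1 : u - c < (k:ℚ) * g := by
      have h := Int.lt_floor_add_one ((u - c)/g)
      rw [div_lt_iff₀ hgpos] at h
      calc u - c < ((⌊(u-c)/g⌋ : ℚ) + 1) * g := h
        _ = (k:ℚ)*g := by rw [hkdef]; push_cast; ring
    have hk2 : (k:ℚ) * g ≤ (u - c) + g := by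
      have h1 : (⌊(u-c)/g⌋ : ℚ) * g ≤ u - c := by
        rw [← le_div_iff₀ hgpos]
        exact Int.floor_le _
      calc (k:ℚ)*g = (⌊(u-c)/g⌋:ℚ)*g + g := by rw [hkdef]; push_cast; ring
        _ ≤ (u - c) + g := by linarith
    have hkg_gp : (k:ℚ)*g ∈ gp M := gp_int_smul hggp k
    have hkgnn : 0 ≤ (k:ℚ)*g := by
      have hk0 : (0:ℚ) ≤ (k:ℚ) := by exact_mod_cast (by omega : (0:ℤ) ≤ k)
      positivity
    have hmem := hcond _ (mem_rootClosure_of_nonneg_s19 hm₀ hm₀pos hkg_gp hkgnn)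
    exact ⟨c + (k:ℚ)*g, hmem, by linarith, by linarith⟩
  -- a positive generator exists
  have hex : ∃ n, 0 < a n := by
    by_contra h
    push_neg at h
    have hzero : ∀ n, a n = 0 := fun n => le_antisymm (h n) (hann n)
    have hall : ∀ m ∈ AddSubmonoid.closure (Set.range a), m ≤ 0 := by
      intro m hm
      induction hm using AddSubmonoid.closure_induction with
      | mem x hx => obtain ⟨n, rfl⟩ := hx; rw [hzero n]
      | zero => exact le_refl 0
      | add x y _ _ ihx ihy => linarith
    have := hall m₀ (by rw [hcl]; exact hm₀)
    linarith
  set n₀ := Nat.find hex with hn₀def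
  set μ := a n₀ with hμdef
  have hμpos : 0 < μ := Nat.find_spec hex
  have hμmin : ∀ n, 0 < a n → μ ≤ a n := by
    intro n hn
    rcases le_or_gt n₀ n with h | h
    · exact hmono h
    · exact absurd hn (Nat.find_min hex h)
  set N : ℕ := ⌈(c+1)/μ⌉₊ with hNdef
  set S₀ : Set ℝ :=
    insert 0 (closure ((fun q : ℚ => (q:ℝ)) '' Set.range a) ∩ Set.Icc 0 ((c:ℝ)+1)) with hS₀def
  have hS₀sub : S₀ ⊆ Set.Icc (0:ℝ) ((c:ℝ)+1) := by
    intro x hx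
    rcases hx with rfl | hx
    · refine ⟨le_refl 0, ?_⟩
      have : (0:ℝ) ≤ (c:ℝ) := by exact_mod_cast hcnn
      linarith
    · exact hx.2
  have hS₀closed : IsClosed S₀ := by
    rw [hS₀def, Set.insert_eq]
    exact isClosed_singleton.union (isClosed_closure.inter isClosed_Icc)
  have hS₀compact : IsCompact S₀ :=
    IsCompact.of_isClosed_subset isCompact_Icc hS₀closed hS₀sub
  have hS₀count : S₀.Countable := by
    apply Set.Countable.insert
    apply Set.Countable.mono (Set.inter_subset_left)
    have hbmono : Monotone (fun n => ((a n : ℚ) : ℝ)) := fun i j h =>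
      Rat.cast_le.2 (hmono h)
    have hsub := closure_range_mono_subset hbmono
    have hrange : Set.range (fun n => ((a n : ℚ) : ℝ)) = (fun q : ℚ => (q:ℝ)) '' Set.range a := by
      rw [← Set.range_comp]
      rfl
    rw [hrange] at hsub
    exact Set.Countable.mono hsub
      (((Set.countable_range a).image _).union (Set.countable_singleton _))
  have h0S₀ : (0:ℝ) ∈ S₀ := Set.mem_insert 0 _
  -- every element of M below c+1 lies in Tset S₀ N
  have hMT : ∀ m : ℚ, m ∈ M → m ≤ c+1 → ((m:ℚ):ℝ) ∈ Tset S₀ N := by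
    intro m hm hmle
    rw [← hcl] at hm
    obtain ⟨l, hlmem, hlsum⟩ := exists_multiset hann hm
    set lR : Multiset ℝ := l.map (fun q : ℚ => (q:ℝ)) with hlRdef
    have hsum : lR.sum = ((m:ℚ):ℝ) := by
      rw [← hlsum, hlRdef]
      exact (map_multiset_sum (Rat.castHom ℝ) l).symm
    have hlnn : ∀ x ∈ l, (0:ℚ) ≤ x := fun x hx => (hlmem x hx).2.le
    have hlself : ∀ x ∈ l, x ≤ m := by
      intro x hx
      rw [← hlsum]
      exact Multiset.single_le_sum hlnn x hx
    have hcard : Multiset.card lR ≤ N := by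
      have hge : ∀ x ∈ l, μ ≤ x := by
        intro x hx
        obtain ⟨⟨n, rfl⟩, hxpos⟩ := hlmem x hx
        exact hμmin n hxpos
      have h1 : (Multiset.card l) • μ ≤ l.sum := Multiset.card_nsmul_le_sum hge
      have h2 : ((Multiset.card l : ℕ):ℚ) * μ ≤ c + 1 := by
        rw [← nsmul_eq_mul]
        exact h1.trans (by rw [hlsum]; exact hmle)
      have h3 : ((Multiset.card l : ℕ):ℚ) ≤ (c+1)/μ := (le_div_iff₀ hμpos).2 h2
      have h4 : ((c+1)/μ : ℚ) ≤ (N:ℚ) := Nat.le_ceil _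
      have h5 : ((Multiset.card l : ℕ):ℚ) ≤ (N:ℚ) := h3.trans h4
      have h6 : Multiset.card l ≤ N := by exact_mod_cast h5
      rw [hlRdef, Multiset.card_map]
      exact h6
    have hmemS : ∀ x ∈ lR, x ∈ S₀ := by
      intro x hx
      obtain ⟨y, hy, rfl⟩ := Multiset.mem_map.1 hx
      refine Set.mem_insert_of_mem _ ⟨subset_closure ⟨y, (hlmem y hy).1, rfl⟩, ?_, ?_⟩
      · exact_mod_cast (hlmem y hy).2.le
      · have : y ≤ c + 1 := (hlself y hy).trans hmle
        exact_mod_cast this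
    rw [← hsum]
    exact multiset_sum_mem_Tset h0S₀ N lR hmemS hcard
  -- the interval (c, c+1) is contained in Tset S₀ N
  have hIooT : Set.Ioo ((c:ℝ)) ((c:ℝ)+1) ⊆ Tset S₀ N := by
    intro x hx
    have hTclosed : IsClosed (Tset S₀ N) := (Tset_isCompact hS₀compact N).isClosed
    have hDsub : ((fun q:ℚ => (q:ℝ)) '' {m | m ∈ M ∧ c < m ∧ m < c + 1}) ⊆ Tset S₀ N := by
      rintro _ ⟨m, ⟨hmM, _, hm2⟩, rfl⟩
      exact hMT m hmM (by linarith)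
    have hxcl : x ∈ closure ((fun q:ℚ => (q:ℝ)) '' {m | m ∈ M ∧ c < m ∧ m < c+1}) := by
      rw [Metric.mem_closure_iff]
      intro ε hε
      set u : ℝ := max (c:ℝ) (x - ε) with hudef
      set v : ℝ := min ((c:ℝ)+1) (x + ε) with hvdef
      have hux : u < x := max_lt hx.1 (by linarith)
      have hxv : x < v := lt_min hx.2 (by linarith)
      obtain ⟨u', huu', hu'x⟩ := exists_rat_btwn hux
      obtain ⟨v', hxv', hv'v⟩ := exists_rat_btwn hxv
      have hcu' : c ≤ u' := by
        have h1 : (c:ℝ) ≤ u := le_max_left _ _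
        exact_mod_cast h1.trans huu'.le
      have hu'v' : u' < v' := by exact_mod_cast hu'x.trans hxv'
      obtain ⟨m, hmM, hm1, hm2⟩ := dens u' v' hcu' hu'v'
      have hm1R : (u':ℝ) < (m:ℝ) := by exact_mod_cast hm1
      have hm2R : (m:ℝ) < (v':ℝ) := by exact_mod_cast hm2
      have hvle : v ≤ (c:ℝ)+1 := min_le_left _ _
      have hule : x - ε ≤ u := le_max_right _ _
      have hvle2 : v ≤ x + ε := min_le_right _ _
      refine ⟨(m:ℝ), ⟨m, ⟨hmM, ?_, ?_⟩, rfl⟩, ?_⟩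
      · exact lt_of_le_of_lt hcu' hm1
      · have : (m:ℝ) < (c:ℝ)+1 := by linarith
        exact_mod_cast this
      · rw [Real.dist_eq, abs_lt]
        constructor <;> linarith
    exact closure_minimal hDsub hTclosed hxcl
  -- contradiction: a countable set contains an interval
  have hcount : (Set.Ioo ((c:ℝ)) ((c:ℝ)+1)).Countable :=
    (Tset_countable hS₀count N).mono hIooT
  have hle := Cardinal.le_aleph0_iff_set_countable.2 hcount
  rw [Cardinal.mk_Ioo_real (by linarith : (c:ℝ) < (c:ℝ)+1)] at hle
  exact absurd hle (not_le.2 Cardinal.aleph0_lt_continuum)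

/-- An increasing Puiseux monoid has nonempty conductorSet iff it is
finitely generated. -/
theorem stmt19 (M : AddSubmonoid ℚ) (hM : IsIncreasing M) :
    (conductorSet M).Nonempty ↔ IsFG M := by
  obtain ⟨a, hmono, hann, hcl⟩ := hM
  have hnn : ∀ m ∈ M, 0 ≤ m := by
    intro m hm; rw [← hcl] at hm; exact nonneg_of_closure hann hm
  constructor
  · rintro ⟨c, hcgp, hcond⟩
    by_cases hpos : ∃ m ∈ M, 0 < m
    · obtain ⟨m₀, hm₀, hm₀pos⟩ := hpos
      obtain ⟨q, hq, hrep⟩ := bound_of_conductor hmono hann hcl hcond hm₀ hm₀pos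
      exact fg_of_conductor_bound ⟨hcgp, hcond⟩ hm₀ hm₀pos hq hrep
    · push_neg at hpos
      refine ⟨∅, ?_⟩
      simp only [Finset.coe_empty, AddSubmonoid.closure_empty]
      ext x
      simp only [AddSubmonoid.mem_bot]
      constructor
      · rintro rfl; exact M.zero_mem
      · intro hx; exact le_antisymm (hpos x hx) (hnn x hx)
  · intro hfg
    exact conductor_of_fg hnn hfg
end
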